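/- arXiv:math/0610399 — 13 statements merged into one kernel-verified Lean document; each statement's English description precedes it below -/
import Mathlib

section
/- Every real root of a degree d SNN polynomial lies in the interval [-d, d-1]. -/
/-- The binomial coefficient polynomial `C(x + d - j, d)` evaluated at a real number. -/
noncomputable def binomR (d j : ℕ) (x : ℝ) : ℝ :=
  (∏ k ∈ Finset.range d, (x + (d : ℝ) - (j : ℝ) - (k : ℝ))) / (d.factorial : ℝ)

lemma binomR_pos_of_gt (d j : ℕ) (hj : j ≤ d) (x : ℝ) (hx : (d : ℝ) - 1 < x) :
    0 < binomR d j x := by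
  unfold binomR
  apply div_pos
  · apply Finset.prod_pos
    intro k hk
    have hk' : (k : ℝ) + 1 ≤ d := by exact_mod_cast Finset.mem_range.mp hk
    have hj' : (j : ℝ) ≤ d := Nat.cast_le.mpr hj
    linarith
  · exact_mod_cast d.factorial_pos

lemma binomR_neg_sign (d j : ℕ) (x : ℝ) (hx : x < -(d : ℝ)) :
    0 < (-1 : ℝ) ^ d * binomR d j x := by
  unfold binomR
  rw [← mul_div_assoc]
  apply div_pos
  · have key : (-1 : ℝ) ^ d * ∏ k ∈ Finset.range d, (x + (d : ℝ) - (j : ℝ) - (k : ℝ)) =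
        ∏ k ∈ Finset.range d, (-(x + (d : ℝ) - (j : ℝ) - (k : ℝ))) := by
      rw [show (fun k : ℕ => -(x + (d : ℝ) - (j : ℝ) - (k : ℝ))) =
          fun k : ℕ => (-1 : ℝ) * (x + (d : ℝ) - (j : ℝ) - (k : ℝ)) from
        funext fun k => by ring, Finset.prod_mul_distrib, Finset.prod_const,
        Finset.card_range]
    rw [key]
    apply Finset.prod_pos
    intro k _
    have h1 : (0 : ℝ) ≤ j := Nat.cast_nonneg j
    have h2 : (0 : ℝ) ≤ k := Nat.cast_nonneg k
    linarith
  · exact_mod_cast d.factorial_pos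

/-- Every real root of a degree `d` SNN polynomial lies in `[-d, d-1]`. -/
theorem stmt_2 (d : ℕ) (h : Fin (d + 1) → ℝ)
    (hnonneg : ∀ j, 0 ≤ h j) (hne : h ≠ 0) (x : ℝ)
    (hroot : ∑ j : Fin (d + 1), h j * binomR d (j : ℕ) x = 0) :
    -(d : ℝ) ≤ x ∧ x ≤ (d : ℝ) - 1 := by
  obtain ⟨j0, hj0⟩ := Function.ne_iff.mp hne
  have hj0pos : 0 < h j0 := lt_of_le_of_ne (hnonneg j0) (Ne.symm hj0)
  constructor
  · by_contra hc
    push_neg at hc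
    have hpos : 0 < ∑ j : Fin (d + 1), h j * ((-1 : ℝ) ^ d * binomR d (j : ℕ) x) := by
      apply Finset.sum_pos'
      · exact fun i _ => mul_nonneg (hnonneg i) (binomR_neg_sign d i x hc).le
      · exact ⟨j0, Finset.mem_univ _, mul_pos hj0pos (binomR_neg_sign d j0 x hc)⟩
    have heq : ∑ j : Fin (d + 1), h j * ((-1 : ℝ) ^ d * binomR d (j : ℕ) x) =
        (-1 : ℝ) ^ d * ∑ j : Fin (d + 1), h j * binomR d (j : ℕ) x := by
      rw [Finset.mul_sum]
      exact Finset.sum_congr rfl fun i _ => by ring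
    rw [heq, hroot, mul_zero] at hpos
    exact lt_irrefl 0 hpos
  · by_contra hc
    push_neg at hc
    have hpos : 0 < ∑ j : Fin (d + 1), h j * binomR d (j : ℕ) x := by
      apply Finset.sum_pos'
      · exact fun i _ => mul_nonneg (hnonneg i)
          (binomR_pos_of_gt d i (Nat.lt_succ_iff.mp i.isLt) x hc).le
      · exact ⟨j0, Finset.mem_univ _,
          mul_pos hj0pos (binomR_pos_of_gt d j0 (Nat.lt_succ_iff.mp j0.isLt) x hc)⟩
    rw [hroot] at hpos
    exact lt_irrefl 0 hpos
end

section
/- All complex roots of a degree d SNN polynomial lie in the closed disc centered at -1/2 with radius d(d - 1/2). -/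
/-- The binomial coefficient polynomial `C(z + d - j, d)` evaluated at a complex number. -/
noncomputable def binomC (d j : ℕ) (z : ℂ) : ℂ :=
  (∏ k ∈ Finset.range d, (z + (d : ℂ) - (j : ℂ) - (k : ℂ))) / (d.factorial : ℂ)


open Real Finset Complex

lemma snn_sin_key (d : ℕ) (hd : 1 ≤ d) :
    2 * (d:ℝ)^2 / (2 * (d:ℝ)^3 - (d:ℝ)^2 + 1) ≤ Real.sin (π / (2*d)) := by
  match d, hd with
  | 1, _ => norm_num
  | 2, _ =>
    have h2 : ((2:ℕ):ℝ) = 2 := by norm_num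
    rw [h2, show π / (2*(2:ℝ)) = π/4 by ring, Real.sin_pi_div_four]
    rw [div_le_div_iff₀ (by norm_num) (by norm_num)]
    nlinarith [Real.sq_sqrt (by norm_num : (2:ℝ) ≥ 0), Real.sqrt_nonneg 2]
  | (n+3), _ =>
    set D : ℝ := ((n+3 : ℕ) : ℝ) with hD
    have hD3 : (3:ℝ) ≤ D := by rw [hD]; exact_mod_cast Nat.le_add_left 3 n
    have hD0 : (0:ℝ) < D := by linarith
    have hπl : 3.141592 < π := Real.pi_gt_d6
    have hπu : π < 3.1416 := Real.pi_lt_d4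
    have hx0 : 0 < π / (2*D) := by positivity
    have hx1 : π / (2*D) ≤ 1 := by
      rw [div_le_one (by positivity)]; nlinarith
    have hsin : π/(2*D) - (π/(2*D))^3/4 < Real.sin (π/(2*D)) := by
      have := Real.sin_gt_sub_cube hx0; nlinarith [pow_pos hx0 3]
    have hden : (0:ℝ) < 2 * D^3 - D^2 + 1 := by nlinarith
    have heq : π/(2*D) - (π/(2*D))^3/4 = (16*π*D^2 - π^3) / (32*D^3) := by
      field_simp; ring
    have h4 : 3*D^4 ≤ D^5 := by
      have := mul_le_mul_of_nonneg_left hD3 (pow_pos hD0 4).le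
      calc 3*D^4 = D^4*3 := by ring
        _ ≤ D^4*D := this
        _ = D^5 := by ring
    have h5 : 3*D^3 ≤ D^4 := by
      have := mul_le_mul_of_nonneg_left hD3 (pow_pos hD0 3).le
      calc 3*D^3 = D^3*3 := by ring
        _ ≤ D^3*D := this
        _ = D^4 := by ring
    have h6 : (9:ℝ) ≤ D^2 := by nlinarith
    have h7 : (0:ℝ) ≤ D^3 := (pow_pos hD0 3).le
    have hπ3 : π^3 ≤ 31.01 := by
      have := pow_le_pow_left₀ Real.pi_pos.le hπu.le 3
      nlinarith
    have hπ16 : (50.26:ℝ) ≤ 16*π := by nlinarith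
    have hkey : 2 * D^2 / (2 * D^3 - D^2 + 1) ≤ (16*π*D^2 - π^3) / (32*D^3) := by
      rw [div_le_div_iff₀ hden (by positivity)]
      have step1 : (50.26*D^2 - 31.01) * (2*D^3 - D^2 + 1)
          ≤ (16*π*D^2 - π^3) * (2*D^3 - D^2 + 1) := by
        apply mul_le_mul_of_nonneg_right _ hden.le
        nlinarith [mul_nonneg (by linarith : (0:ℝ) ≤ 16*π - 50.26) (sq_nonneg D)]
      have step2 : 64*D^5 ≤ (50.26*D^2 - 31.01) * (2*D^3 - D^2 + 1) := by
        nlinarith [h4, h5, h6, h7]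
      linarith
    calc 2 * D^2 / (2 * D^3 - D^2 + 1) ≤ (16*π*D^2 - π^3) / (32*D^3) := hkey
      _ = π/(2*D) - (π/(2*D))^3/4 := heq.symm
      _ ≤ Real.sin (π/(2*D)) := le_of_lt hsin

lemma snn_main_ineq (d : ℕ) (hd : 1 ≤ d) :
    (d:ℝ) / (2 * Real.sin (π/(2*d))) +
      Real.sqrt ((((d:ℝ)-1)/2)^2 + ((d:ℝ) * Real.cos (π/(2*d)) / (2 * Real.sin (π/(2*d))))^2)
      ≤ (d:ℝ)^2 - (d:ℝ)/2 := by
  have hD1 : (1:ℝ) ≤ (d:ℝ) := by exact_mod_cast hd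
  have hD0 : (0:ℝ) < (d:ℝ) := by linarith
  set D := (d:ℝ)
  set θ := π/(2*D) with hθ
  have hθ0 : 0 < θ := by positivity
  have hθπ : θ ≤ π/2 := by
    rw [hθ, div_le_div_iff₀ (by positivity) (by norm_num)]
    nlinarith [Real.pi_pos]
  have hs0 : 0 < Real.sin θ := Real.sin_pos_of_pos_of_lt_pi hθ0 (by nlinarith [Real.pi_pos])
  have hc0 : 0 ≤ Real.cos θ := Real.cos_nonneg_of_mem_Icc ⟨by linarith, hθπ⟩
  have hcs : Real.cos θ ^ 2 = 1 - Real.sin θ ^ 2 := by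
    have := Real.sin_sq_add_cos_sq θ; linarith
  set s := Real.sin θ with hsdef
  set c := Real.cos θ
  have hden : (0:ℝ) < 2 * D^3 - D^2 + 1 := by nlinarith
  have hkey : 2 * D^2 ≤ s * (2 * D^3 - D^2 + 1) := by
    have := snn_sin_key d hd
    rw [div_le_iff₀ hden] at this
    linarith [this]
  have hs1 : s ≤ 1 := Real.sin_le_one θ
  -- T ≥ 0 : (2D-1) s ≥ 1
  have h2d1 : 1 ≤ (2*D - 1) * s := by nlinarith
  have hT0 : 0 ≤ D^2 - D/2 - D/(2*s) := by
    rw [sub_nonneg, div_le_iff₀ (by positivity)]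
    nlinarith
  have hsq : ((D-1)/2)^2 + (D * c / (2*s))^2 ≤ (D^2 - D/2 - D/(2*s))^2 := by
    have hbr : 0 ≤ (2*D-1)*s * ((2*D^3-D^2+1)*s - 2*D^2) :=
      mul_nonneg (by nlinarith) (by nlinarith)
    have hX : (D-1)^2*s^2 + D^2*c^2 ≤ ((2*D^2-D)*s - D)^2 := by
      have hid : ((2*D^2-D)*s - D)^2 - ((D-1)^2*s^2 + D^2*c^2)
          = (2*D-1)*s*((2*D^3-D^2+1)*s - 2*D^2) + D^2*((1 - s^2) - c^2) := by ring
      nlinarith [hbr, hcs]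
    have e1 : ((D-1)/2)^2 + (D*c/(2*s))^2 = ((D-1)^2*s^2 + D^2*c^2)/(4*s^2) := by
      field_simp; ring
    have e2 : (D^2 - D/2 - D/(2*s))^2 = ((2*D^2-D)*s - D)^2/(4*s^2) := by
      field_simp; ring
    rw [e1, e2]
    gcongr
  calc D/(2*s) + Real.sqrt (((D-1)/2)^2 + (D*c/(2*s))^2)
      ≤ D/(2*s) + Real.sqrt ((D^2 - D/2 - D/(2*s))^2) := by
        gcongr
    _ = D/(2*s) + (D^2 - D/2 - D/(2*s)) := by rw [Real.sqrt_sq hT0]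
    _ = D^2 - D/2 := by ring

lemma snn_core (d i : ℕ) (hd : 1 ≤ d) (hi : i < d) (x y : ℝ)
    (hcon : ((x + d - i) * (x - i) + y^2) * Real.sin (π/(2*(d:ℝ)))
      ≤ d * |y| * Real.cos (π/(2*(d:ℝ)))) :
    Real.sqrt ((x + 1/2)^2 + y^2) ≤ (d:ℝ)^2 - (d:ℝ)/2 := by
  have hD1 : (1:ℝ) ≤ (d:ℝ) := by exact_mod_cast hd
  have hD0 : (0:ℝ) < (d:ℝ) := by linarith
  set D := (d:ℝ) with hDdef
  set θ := π/(2*D) with hθ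
  have hθ0 : 0 < θ := by positivity
  have hθπ : θ ≤ π/2 := by
    rw [hθ, div_le_div_iff₀ (by positivity) (by norm_num)]
    nlinarith [Real.pi_pos]
  have hs0 : 0 < Real.sin θ := Real.sin_pos_of_pos_of_lt_pi hθ0 (by nlinarith [Real.pi_pos])
  set s := Real.sin θ with hsdef
  set c := Real.cos θ with hcdef
  set h0 := D * c / (2*s) with hh0
  set R := D / (2*s) with hR
  have hR0 : 0 ≤ R := by positivity
  -- from hcon: point lies in the lens disc
  have hdisc : (x - i + D/2)^2 + (|y| - h0)^2 ≤ R^2 := by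
    have h1 : (x + D - i) * (x - i) + y^2 ≤ D * |y| * c / s := by
      rw [le_div_iff₀ hs0]; exact hcon
    have h2 : D * |y| * c / s = 2 * h0 * |y| := by rw [hh0]; field_simp
    have h3 : y^2 = |y|^2 := (_root_.sq_abs y).symm
    have hcs : c^2 = 1 - s^2 := by
      have := Real.sin_sq_add_cos_sq θ; rw [← hsdef, ← hcdef] at this; linarith
    have h4 : R^2 = D^2/4 + h0^2 := by
      rw [hR, hh0]
      field_simp
      linear_combination (-4) * hcs
    nlinarith [h1, h2, h3, h4]
  -- Minkowski
  have habs1 : Real.sqrt ((x + 1/2)^2 + y^2)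
      = ‖((x + 1/2 : ℝ)) + (|y| : ℝ) * Complex.I‖ := by
    rw [show (x + 1/2)^2 + y^2 = (x + 1/2)^2 + |y|^2 by rw [_root_.sq_abs],
      Complex.norm_add_mul_I]
  have htri : ‖((x + 1/2 : ℝ)) + (|y| : ℝ) * Complex.I‖
      ≤ ‖((x - i + D/2 : ℝ)) + ((|y| - h0 : ℝ)) * Complex.I‖
        + ‖(((i:ℝ) - D/2 + 1/2 : ℝ)) + (h0 : ℝ) * Complex.I‖ := by
    have heq : (((x + 1/2 : ℝ)) + (|y| : ℝ) * Complex.I)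
        = (((x - i + D/2 : ℝ)) + ((|y| - h0 : ℝ)) * Complex.I)
          + ((((i:ℝ) - D/2 + 1/2 : ℝ)) + (h0 : ℝ) * Complex.I) := by
      push_cast; ring
    rw [heq]; exact norm_add_le _ _
  have hp : ‖((x - i + D/2 : ℝ)) + ((|y| - h0 : ℝ)) * Complex.I‖ ≤ R := by
    rw [Complex.norm_add_mul_I]
    calc Real.sqrt ((x - i + D/2)^2 + (|y| - h0)^2) ≤ Real.sqrt (R^2) :=
          Real.sqrt_le_sqrt hdisc
      _ = R := Real.sqrt_sq hR0
  have hq : ‖(((i:ℝ) - D/2 + 1/2 : ℝ)) + (h0 : ℝ) * Complex.I‖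
      ≤ Real.sqrt (((D-1)/2)^2 + h0^2) := by
    rw [Complex.norm_add_mul_I]
    apply Real.sqrt_le_sqrt
    have hi1 : (i:ℝ) ≤ D - 1 := by
      rw [hDdef]; push_cast
      have : (i:ℝ) + 1 ≤ (d:ℝ) := by exact_mod_cast hi
      linarith
    have hi0 : (0:ℝ) ≤ (i:ℝ) := Nat.cast_nonneg i
    have : ((i:ℝ) - D/2 + 1/2)^2 ≤ ((D-1)/2)^2 := by
      apply sq_le_sq' <;> linarith
    linarith
  calc Real.sqrt ((x + 1/2)^2 + y^2)
      ≤ R + Real.sqrt (((D-1)/2)^2 + h0^2) := by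
        rw [habs1]; exact htri.trans (by linarith [hp, hq])
    _ ≤ D^2 - D/2 := by
        have := snn_main_ineq d hd
        rw [← hθ, ← hsdef, ← hcdef] at this
        exact this

lemma snn_arg_lt (d i : ℕ) (hd : 1 ≤ d) (hi : i < d) (z : ℂ)
    (hz : (d:ℝ)^2 - (d:ℝ)/2 < ‖z + 1/2‖) :
    0 < ((z + d - i) * (starRingEnd ℂ) (z - i)).re ∧
      |Complex.arg ((z + d - i) * (starRingEnd ℂ) (z - i))| < π/(2*(d:ℝ)) := by
  have hD1 : (1:ℝ) ≤ (d:ℝ) := by exact_mod_cast hd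
  have hD0 : (0:ℝ) < (d:ℝ) := by linarith
  set x := z.re with hx
  set y := z.im with hy
  set N := (z + d - i) * (starRingEnd ℂ) (z - i) with hN
  have hNre : N.re = (x + d - i) * (x - i) + y^2 := by
    rw [hN]; simp [Complex.mul_re, Complex.sub_re, Complex.add_re, Complex.sub_im,
      Complex.add_im, Complex.conj_re, Complex.conj_im]
    ring
  have hNim : N.im = -(y * d) := by
    rw [hN]; simp [Complex.mul_im, Complex.sub_re, Complex.add_re, Complex.sub_im,
      Complex.add_im, Complex.conj_re, Complex.conj_im]
    ring
  set θ := π/(2*(d:ℝ)) with hθ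
  have hθ0 : 0 < θ := by positivity
  have hθπ : θ ≤ π/2 := by
    rw [hθ, div_le_div_iff₀ (by positivity) (by norm_num)]
    nlinarith [Real.pi_pos]
  have hs0 : 0 < Real.sin θ := Real.sin_pos_of_pos_of_lt_pi hθ0 (by nlinarith [Real.pi_pos])
  have hc0 : 0 ≤ Real.cos θ := Real.cos_nonneg_of_mem_Icc ⟨by linarith, hθπ⟩
  -- the core strict inequality
  have hcore : (d:ℝ) * |y| * Real.cos θ < N.re * Real.sin θ := by
    by_contra hcon
    push_neg at hcon
    rw [hNre] at hcon
    have := snn_core d i hd hi x y hcon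
    have habs : ‖z + 1/2‖ = Real.sqrt ((x + 1/2)^2 + y^2) := by
      have hzeq : z + 1/2 = ((x + 1/2 : ℝ) : ℂ) + (y:ℝ) * Complex.I := by
        rw [Complex.ext_iff]; constructor <;> simp [hx, hy]
      rw [hzeq, Complex.norm_add_mul_I]
    rw [habs] at hz
    linarith
  have hNre0 : 0 < N.re := by nlinarith [abs_nonneg y, mul_nonneg (mul_nonneg hD0.le (abs_nonneg y)) hc0]
  refine ⟨hNre0, ?_⟩
  have hargpi2 : |Complex.arg N| < π/2 :=
    Complex.abs_arg_lt_pi_div_two_iff.mpr (Or.inl hNre0)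
  rcases eq_or_lt_of_le hθπ with hhalf | hθlt
  · rw [hhalf]; exact hargpi2
  -- θ < π/2 : cos θ > 0, compare tangents
  have hcpos : 0 < Real.cos θ := Real.cos_pos_of_mem_Ioo ⟨by linarith, hθlt⟩
  have htan : |Real.tan (Complex.arg N)| < Real.tan θ := by
    rw [Complex.tan_arg, Real.tan_eq_sin_div_cos, abs_div, abs_of_pos hNre0]
    rw [div_lt_div_iff₀ hNre0 hcpos]
    calc |N.im| * Real.cos θ = (d:ℝ) * |y| * Real.cos θ := by
          rw [hNim, abs_neg, abs_mul, abs_of_pos hD0]; ring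
      _ < N.re * Real.sin θ := hcore
      _ = Real.sin θ * N.re := mul_comm _ _
  by_contra hge
  push_neg at hge
  have hmem1 : θ ∈ Set.Ioo (-(π/2)) (π/2) := ⟨by linarith, hθlt⟩
  have hmem2 : Complex.arg N ∈ Set.Ioo (-(π/2)) (π/2) :=
    ⟨by have := abs_lt.mp hargpi2; linarith [this.1], (abs_lt.mp hargpi2).2⟩
  have hmono := Real.strictMonoOn_tan.monotoneOn
  rcases le_or_gt 0 (Complex.arg N) with hpos | hneg
  · have h1 : Real.tan θ ≤ Real.tan (Complex.arg N) := by
      apply hmono hmem1 hmem2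
      rw [_root_.abs_of_nonneg hpos] at hge; exact hge
    have h2 : Real.tan (Complex.arg N) ≤ |Real.tan (Complex.arg N)| := le_abs_self _
    linarith
  · have hmem3 : -Complex.arg N ∈ Set.Ioo (-(π/2)) (π/2) :=
      ⟨by linarith [hmem2.2], by linarith [hmem2.1]⟩
    have h1 : Real.tan θ ≤ Real.tan (-Complex.arg N) := by
      apply hmono hmem1 hmem3
      rw [_root_.abs_of_neg hneg] at hge; exact hge
    rw [Real.tan_neg] at h1
    have h2 : -Real.tan (Complex.arg N) ≤ |Real.tan (Complex.arg N)| := neg_le_abs _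
    linarith

lemma snn_prod_re_pos (d : ℕ) (hd : 1 ≤ d) (z : ℂ)
    (hz : (d:ℝ)^2 - (d:ℝ)/2 < ‖z + 1/2‖) (j : ℕ) (hj : j ≤ d) :
    0 < (∏ i ∈ Finset.Ico j d, ((z + d - i) / (z - i))).re := by
  have hD0 : (0:ℝ) < (d:ℝ) := by exact_mod_cast hd
  set W : ℕ → ℂ := fun i => (z + d - i) / (z - i) with hW
  have hfacts : ∀ i ∈ Finset.Ico j d, W i ≠ 0 ∧ |Complex.arg (W i)| < π/(2*(d:ℝ)) := by
    intro i hi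
    have hid : i < d := (Finset.mem_Ico.mp hi).2
    obtain ⟨hre, harg⟩ := snn_arg_lt d i hd hid z hz
    set N := (z + d - i) * (starRingEnd ℂ) (z - i) with hN
    have hNne : N ≠ 0 := fun hc => by simp [hc] at hre
    have hne1 : z + d - i ≠ 0 := fun hc => hNne (by rw [hN, hc, zero_mul])
    have hne2 : z - i ≠ 0 := by
      intro hc
      exact hNne (by rw [hN, hc, map_zero, mul_zero])
    have hns0 : 0 < Complex.normSq (z - i) := Complex.normSq_pos.mpr hne2
    have hWeq : W i = (((Complex.normSq (z - i))⁻¹ : ℝ) : ℂ) * N := by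
      have hns' : ((Complex.normSq (z - i) : ℝ) : ℂ) ≠ 0 := by exact_mod_cast hns0.ne'
      rw [hW, hN, Complex.ofReal_inv, div_eq_iff hne2]
      rw [show (((Complex.normSq (z - i) : ℝ) : ℂ))⁻¹ * ((z + d - i) * (starRingEnd ℂ) (z - i)) * (z - i)
          = (((Complex.normSq (z - i) : ℝ) : ℂ))⁻¹ * ((z - i) * (starRingEnd ℂ) (z - i)) * (z + d - i) from by ring,
        Complex.mul_conj, inv_mul_cancel₀ hns', one_mul]
    constructor
    · rw [hWeq]
      exact mul_ne_zero (by exact_mod_cast (inv_pos.mpr hns0).ne') hNne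
    · rw [hWeq, Complex.arg_real_mul _ (inv_pos.mpr hns0)]
      exact harg
  have hprod : ∏ i ∈ Finset.Ico j d, W i
      = ((∏ i ∈ Finset.Ico j d, ‖W i‖ : ℝ) : ℂ)
        * Complex.exp (((∑ i ∈ Finset.Ico j d, Complex.arg (W i) : ℝ)) * Complex.I) := by
    calc ∏ i ∈ Finset.Ico j d, W i
        = ∏ i ∈ Finset.Ico j d,
            ((‖W i‖ : ℂ) * Complex.exp ((Complex.arg (W i) : ℝ) * Complex.I)) :=
          Finset.prod_congr rfl (fun i _ => (Complex.norm_mul_exp_arg_mul_I (W i)).symm)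
      _ = (∏ i ∈ Finset.Ico j d, (‖W i‖ : ℂ))
            * ∏ i ∈ Finset.Ico j d, Complex.exp ((Complex.arg (W i) : ℝ) * Complex.I) :=
          Finset.prod_mul_distrib
      _ = ((∏ i ∈ Finset.Ico j d, ‖W i‖ : ℝ) : ℂ)
            * Complex.exp (∑ i ∈ Finset.Ico j d, ((Complex.arg (W i) : ℝ) * Complex.I)) := by
          rw [Complex.ofReal_prod, Complex.exp_sum]
      _ = ((∏ i ∈ Finset.Ico j d, ‖W i‖ : ℝ) : ℂ)
            * Complex.exp (((∑ i ∈ Finset.Ico j d, Complex.arg (W i) : ℝ)) * Complex.I) := by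
          rw [← Finset.sum_mul, Complex.ofReal_sum]
  rw [hprod, Complex.re_ofReal_mul, Complex.exp_ofReal_mul_I_re]
  apply mul_pos
  · apply Finset.prod_pos
    intro i hi
    exact norm_pos_iff.mpr (hfacts i hi).1
  · apply Real.cos_pos_of_mem_Ioo
    have hbound : |∑ i ∈ Finset.Ico j d, Complex.arg (W i)| < π/2 := by
      rcases Finset.eq_empty_or_nonempty (Finset.Ico j d) with hemp | hne
      · rw [hemp]; simp [Real.pi_pos]
      · calc |∑ i ∈ Finset.Ico j d, Complex.arg (W i)|
            ≤ ∑ i ∈ Finset.Ico j d, |Complex.arg (W i)| := Finset.abs_sum_le_sum_abs _ _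
          _ < ∑ _i ∈ Finset.Ico j d, π/(2*(d:ℝ)) :=
            Finset.sum_lt_sum_of_nonempty hne (fun i hi => (hfacts i hi).2)
          _ = ((d - j : ℕ) : ℝ) * (π/(2*(d:ℝ))) := by
            rw [Finset.sum_const, Nat.card_Ico, nsmul_eq_mul]
          _ ≤ ((d:ℝ)) * (π/(2*(d:ℝ))) := by
            apply mul_le_mul_of_nonneg_right _ (by positivity)
            exact_mod_cast Nat.sub_le d j
          _ = π/2 := by field_simp
    exact ⟨by linarith [abs_lt.mp hbound |>.1], (abs_lt.mp hbound).2⟩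

lemma snn_step (d j : ℕ) (z : ℂ) (hj : j < d) (hzj : z - (j:ℂ) ≠ 0) :
    binomC d j z = ((z + d - j)/(z - j)) * binomC d (j+1) z := by
  have hfac : ((d.factorial : ℕ) : ℂ) ≠ 0 := Nat.cast_ne_zero.mpr d.factorial_ne_zero
  set f : ℕ → ℂ := fun k => z + (d:ℂ) - (j:ℂ) - (k:ℂ) with hf
  have h1 : ∏ k ∈ Finset.range (d+1), f k = (∏ k ∈ Finset.range d, f k) * (z - j) := by
    rw [Finset.prod_range_succ]
    congr 1
    rw [hf]; push_cast; ring
  have h2 : ∏ k ∈ Finset.range (d+1), f k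
      = (∏ k ∈ Finset.range d, (z + (d:ℂ) - ((j+1 : ℕ):ℂ) - (k:ℂ))) * (z + d - j) := by
    rw [Finset.prod_range_succ']
    congr 1
    · apply Finset.prod_congr rfl
      intro k _
      rw [hf]; push_cast; ring
    · rw [hf]; push_cast; ring
  have hP : (∏ k ∈ Finset.range d, f k) * (z - j)
      = (z + d - j) * ∏ k ∈ Finset.range d, (z + (d:ℂ) - ((j+1 : ℕ):ℂ) - (k:ℂ)) := by
    rw [← h1, h2]; ring
  rw [binomC, binomC, div_mul_div_comm, div_eq_div_iff hfac (mul_ne_zero hzj hfac)]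
  rw [← hf]
  linear_combination ((d.factorial : ℕ) : ℂ) * hP

lemma snn_telescope (d : ℕ) (z : ℂ) (hzi : ∀ i, i < d → z - (i:ℂ) ≠ 0) :
    ∀ n j, j + n = d →
      binomC d j z = binomC d d z * ∏ i ∈ Finset.Ico j d, ((z + d - i)/(z - i)) := by
  intro n
  induction n with
  | zero =>
    intro j hj
    have : j = d := by omega
    subst this
    simp
  | succ n ih =>
    intro j hj
    have hjd : j < d := by omega
    rw [snn_step d j z hjd (hzi j hjd), ih (j+1) (by omega),
      Finset.prod_eq_prod_Ico_succ_bot hjd]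
    ring

/-- All complex roots of a degree `d` SNN polynomial lie in the closed disc centered
at `-1/2` with radius `d(d - 1/2)`. -/
theorem stmt_3 (d : ℕ) (h : Fin (d + 1) → ℝ)
    (hnonneg : ∀ j, 0 ≤ h j) (hne : h ≠ 0) (z : ℂ)
    (hroot : ∑ j : Fin (d + 1), (h j : ℂ) * binomC d (j : ℕ) z = 0) :
    ‖z + 1 / 2‖ ≤ (d : ℝ) * ((d : ℝ) - 1 / 2) := by
  obtain ⟨j0, hj0⟩ := Function.ne_iff.mp hne
  have hj0pos : 0 < h j0 := lt_of_le_of_ne (hnonneg j0) (Ne.symm hj0)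
  rcases Nat.eq_zero_or_pos d with rfl | hd
  · -- d = 0 : impossible root
    exfalso
    simp only [binomC, Finset.range_zero, Finset.prod_empty, Nat.factorial_zero,
      Nat.cast_one, div_one, mul_one] at hroot
    have hs : ∑ j : Fin 1, h j = 0 := by exact_mod_cast hroot
    have := (Finset.sum_eq_zero_iff_of_nonneg (fun i _ => hnonneg i)).mp hs j0 (Finset.mem_univ j0)
    exact hj0 this
  · by_contra hcon
    push_neg at hcon
    have hz : (d:ℝ)^2 - (d:ℝ)/2 < ‖z + 1/2‖ := by nlinarith [hcon]
    have hzi : ∀ i, i < d → z - (i:ℂ) ≠ 0 := by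
      intro i hi hc
      obtain ⟨hre, -⟩ := snn_arg_lt d i hd hi z hz
      rw [hc, map_zero, mul_zero] at hre
      simp at hre
    have hDne : binomC d d z ≠ 0 := by
      rw [binomC]
      apply div_ne_zero _ (Nat.cast_ne_zero.mpr d.factorial_ne_zero)
      rw [Finset.prod_ne_zero_iff]
      intro k hk
      have hk' := Finset.mem_range.mp hk
      have := hzi k hk'
      intro hc
      apply this
      rw [← hc]; ring
    have hsum : ∑ j : Fin (d + 1), (h j : ℂ) *
        (binomC d d z * ∏ i ∈ Finset.Ico (j:ℕ) d, ((z + d - i)/(z - i))) = 0 := by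
      rw [← hroot]
      apply Finset.sum_congr rfl
      intro j _
      rw [snn_telescope d z hzi (d - (j:ℕ)) (j:ℕ) (by omega)]
    have hS : ∑ j : Fin (d + 1), (h j : ℂ) *
        ∏ i ∈ Finset.Ico (j:ℕ) d, ((z + d - i)/(z - i)) = 0 := by
      have : binomC d d z * (∑ j : Fin (d + 1), (h j : ℂ) *
          ∏ i ∈ Finset.Ico (j:ℕ) d, ((z + d - i)/(z - i))) = 0 := by
        rw [Finset.mul_sum, ← hsum]
        apply Finset.sum_congr rfl
        intro j _; ring
      rcases mul_eq_zero.mp this with hbad | hok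
      · exact absurd hbad hDne
      · exact hok
    have hre0 : (0:ℝ) = ∑ j : Fin (d + 1),
        (h j) * (∏ i ∈ Finset.Ico (j:ℕ) d, ((z + d - i)/(z - i))).re := by
      have := congrArg Complex.re hS
      rw [Complex.re_sum] at this
      simp only [Complex.zero_re] at this
      rw [← this]
      apply Finset.sum_congr rfl
      intro j _
      rw [Complex.re_ofReal_mul]
    have hpos : (0:ℝ) < ∑ j : Fin (d + 1),
        (h j) * (∏ i ∈ Finset.Ico (j:ℕ) d, ((z + d - i)/(z - i))).re := by
      apply Finset.sum_pos'
      · intro j _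
        exact mul_nonneg (hnonneg j)
          (snn_prod_re_pos d hd z hz (j:ℕ) (Nat.lt_succ_iff.mp j.isLt)).le
      · exact ⟨j0, Finset.mem_univ j0,
          mul_pos hj0pos (snn_prod_re_pos d hd z hz (j0:ℕ) (Nat.lt_succ_iff.mp j0.isLt))⟩
    linarith [hre0, hpos]
end

section
/- For d \ge 2, no SNN polynomial of degree d has a root in the open pointed cone in \mathbb{C} with vertex d-1, angular width 2\pi/d, and bisecting ray (d-1, \infty); that is, no root z satisfies Re(z) > d-1 and |Arg(z - (d-1))| < \pi/d. -/
open Complex Finset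

lemma aux_arg (w : ℂ) (hw : 0 < w.re) (c : ℝ) (hc : 0 ≤ c) :
    |Complex.arg (w + c) - Complex.arg w / 2| ≤ |Complex.arg w| / 2 := by
  have hre : (w + (c : ℂ)).re = w.re + c := by simp
  have him : (w + (c : ℂ)).im = w.im := by simp
  have hw' : (0:ℝ) ≤ (w + (c : ℂ)).re := by rw [hre]; linarith
  have hw0 : w ≠ 0 := fun h => by simp [h] at hw
  have habs0 : 0 < ‖w‖ := norm_pos_iff.mpr hw0
  have habs0' : 0 < ‖w + (c:ℂ)‖ := norm_pos_iff.mpr (fun h => by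
    rw [h] at hre; simp at hre; linarith)
  have habs : ‖w‖ ≤ ‖w + (c:ℂ)‖ := by
    rw [Complex.norm_def, Complex.norm_def, Complex.normSq_apply, Complex.normSq_apply,
      hre, him]
    apply Real.sqrt_le_sqrt; nlinarith
  rw [Complex.arg_of_re_nonneg hw', Complex.arg_of_re_nonneg hw.le, him]
  rcases le_or_gt 0 w.im with h1 | h1
  · have e1 : (0:ℝ) ≤ Real.arcsin (w.im / ‖w + (c:ℂ)‖) :=
      Real.arcsin_nonneg.mpr (div_nonneg h1 habs0'.le)
    have e2 : Real.arcsin (w.im / ‖w + (c:ℂ)‖) ≤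
        Real.arcsin (w.im / ‖w‖) := by
      apply Real.monotone_arcsin
      gcongr
    rw [_root_.abs_of_nonneg (le_trans e1 e2)]
    rw [abs_le]; constructor <;> linarith
  · have e1 : Real.arcsin (w.im / ‖w + (c:ℂ)‖) ≤ 0 :=
      Real.arcsin_nonpos.mpr (div_nonpos_of_nonpos_of_nonneg h1.le habs0'.le)
    have e2 : Real.arcsin (w.im / ‖w‖) ≤
        Real.arcsin (w.im / ‖w + (c:ℂ)‖) := by
      apply Real.monotone_arcsin
      rw [div_le_div_iff₀ habs0 habs0']
      nlinarith
    rw [_root_.abs_of_nonpos (le_trans e2 e1)]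
    rw [abs_le]; constructor <;> linarith

/-- For `d ≥ 2`, no SNN polynomial of degree `d` has a root in the open pointed cone
with vertex `d - 1`, angular width `2π/d`, bisecting ray `(d-1, ∞)`. -/
theorem stmt_4 (d : ℕ) (hd : 2 ≤ d) (h : Fin (d + 1) → ℝ)
    (hnonneg : ∀ j, 0 ≤ h j) (hne : h ≠ 0) (z : ℂ)
    (hroot : ∑ j : Fin (d + 1), (h j : ℂ) * binomC d (j : ℕ) z = 0) :
    ¬((d : ℝ) - 1 < z.re ∧ |Complex.arg (z - ((d : ℂ) - 1))| < Real.pi / d) := by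
  rintro ⟨hzre, harg⟩
  set w : ℂ := z - ((d : ℂ) - 1) with hwdef
  have hwre : 0 < w.re := by
    simp only [hwdef, Complex.sub_re, Complex.one_re, Complex.natCast_re]
    linarith
  set φ := Complex.arg w with hφdef
  set c : Fin (d + 1) → ℕ → ℝ := fun j k => 2 * d - 1 - (j : ℕ) - k with hcdef
  have hc : ∀ (j : Fin (d + 1)), ∀ k ∈ Finset.range d, 0 ≤ c j k := by
    intro j k hk
    have hj : ((j : ℕ) : ℝ) ≤ d := by exact_mod_cast Nat.lt_succ_iff.mp j.isLt
    have hk' : (k : ℝ) + 1 ≤ d := by exact_mod_cast Finset.mem_range.mp hk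
    simp only [hcdef]; linarith
  have hfac : ∀ (j : Fin (d + 1)), ∀ k ∈ Finset.range d,
      z + (d : ℂ) - ((j : ℕ) : ℂ) - (k : ℂ) = w + ((c j k : ℝ) : ℂ) := by
    intro j k hk
    simp only [hwdef, hcdef]
    push_cast
    ring
  set θ : Fin (d + 1) → ℕ → ℝ := fun j k => Complex.arg (w + ((c j k : ℝ) : ℂ)) with hθdef
  set r : Fin (d + 1) → ℕ → ℝ := fun j k => ‖w + ((c j k : ℝ) : ℂ)‖ with hrdef
  have hrpos : ∀ (j : Fin (d + 1)), ∀ k ∈ Finset.range d, 0 < r j k := by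
    intro j k hk
    apply norm_pos_iff.mpr
    intro hh
    have h2 : (w + ((c j k : ℝ) : ℂ)).re = w.re + c j k := by simp
    rw [hh] at h2
    simp only [Complex.zero_re] at h2
    have := hc j k hk
    linarith
  have hθb : ∀ (j : Fin (d + 1)), ∀ k ∈ Finset.range d, |θ j k - φ / 2| ≤ |φ| / 2 := by
    intro j k hk
    exact aux_arg w hwre (c j k) (hc j k hk)
  set S : Fin (d + 1) → ℝ := fun j => ∑ k ∈ Finset.range d, θ j k with hSdef
  have hSb : ∀ j : Fin (d + 1), |S j - d * φ / 2| < Real.pi / 2 := by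
    intro j
    have h1 : S j - d * φ / 2 = ∑ k ∈ Finset.range d, (θ j k - φ / 2) := by
      rw [Finset.sum_sub_distrib]
      simp only [Finset.sum_const, Finset.card_range, nsmul_eq_mul, hSdef]
      ring
    have h2 : |S j - d * φ / 2| ≤ ∑ k ∈ Finset.range d, |θ j k - φ / 2| := by
      rw [h1]; exact Finset.abs_sum_le_sum_abs _ _
    have h3 : ∑ k ∈ Finset.range d, |θ j k - φ / 2| ≤ d * (|φ| / 2) := by
      calc ∑ k ∈ Finset.range d, |θ j k - φ / 2| ≤ ∑ k ∈ Finset.range d, |φ| / 2 :=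
            Finset.sum_le_sum (hθb j)
        _ = d * (|φ| / 2) := by
            simp only [Finset.sum_const, Finset.card_range, nsmul_eq_mul]
    have hd0 : (0:ℝ) < d := by positivity
    have h4 : (d:ℝ) * (|φ| / 2) < d * (Real.pi / d / 2) := by
      rcases eq_or_lt_of_le (abs_nonneg φ) with he | he
      · rw [← he]; simp; positivity
      · gcongr
    have h5 : (d:ℝ) * (Real.pi / d / 2) = Real.pi / 2 := by field_simp
    linarith
  have hprod : ∀ j : Fin (d + 1),
      binomC d (j : ℕ) z =
        (((∏ k ∈ Finset.range d, r j k) / d.factorial : ℝ) : ℂ) *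
          Complex.exp (((S j : ℝ) : ℂ) * Complex.I) := by
    intro j
    rw [binomC]
    rw [Finset.prod_congr rfl (hfac j)]
    have heach : ∀ k ∈ Finset.range d,
        w + ((c j k : ℝ) : ℂ) = ((r j k : ℝ) : ℂ) * Complex.exp (((θ j k : ℝ):ℂ) * Complex.I) := by
      intro k hk
      rw [hrdef, hθdef]
      exact (Complex.norm_mul_exp_arg_mul_I _).symm
    have hsum : (∑ x ∈ Finset.range d, ((θ j x : ℝ):ℂ) * Complex.I) = ((S j : ℝ):ℂ) * Complex.I := by
      rw [← Finset.sum_mul, hSdef]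
      push_cast
      ring
    rw [Finset.prod_congr rfl heach, Finset.prod_mul_distrib, ← Complex.exp_sum, hsum]
    push_cast
    ring
  have hkey : ∑ j : Fin (d + 1),
      h j * ((∏ k ∈ Finset.range d, r j k) / d.factorial) * Real.cos (S j - d * φ / 2) = 0 := by
    have hrot := congrArg
      (fun x => (Complex.exp (((-((d:ℝ) * φ / 2) : ℝ) : ℂ) * Complex.I) * x).re) hroot
    simp only [mul_zero, Complex.zero_re, Finset.mul_sum] at hrot
    rw [Complex.re_sum] at hrot
    rw [← hrot]
    apply Finset.sum_congr rfl
    intro j _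
    rw [hprod j]
    have e1 : Complex.exp (((-((d:ℝ) * φ / 2) : ℝ) : ℂ) * Complex.I) *
        ((h j : ℂ) * ((((∏ k ∈ Finset.range d, r j k) / d.factorial : ℝ) : ℂ) *
          Complex.exp (((S j : ℝ):ℂ) * Complex.I)))
        = (((h j * ((∏ k ∈ Finset.range d, r j k) / d.factorial) : ℝ)) : ℂ) *
            Complex.exp (((S j - d * φ / 2 : ℝ) : ℂ) * Complex.I) := by
      rw [show ((S j - d * φ / 2 : ℝ) : ℂ) = ((S j : ℝ):ℂ) + ((-((d:ℝ) * φ / 2) : ℝ):ℂ) by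
        push_cast; ring]
      rw [add_mul, Complex.exp_add]
      push_cast
      ring
    rw [e1, Complex.re_ofReal_mul, Complex.exp_ofReal_mul_I_re]
  obtain ⟨j0, hj0⟩ := Function.ne_iff.mp hne
  have hj0' : h j0 ≠ 0 := by simpa using hj0
  have hterm : ∀ j : Fin (d + 1), 0 ≤ h j * ((∏ k ∈ Finset.range d, r j k) / d.factorial) *
      Real.cos (S j - d * φ / 2) := by
    intro j
    have hcos : 0 < Real.cos (S j - d * φ / 2) :=
      Real.cos_pos_of_mem_Ioo ⟨by linarith [(abs_lt.mp (hSb j)).1], (abs_lt.mp (hSb j)).2⟩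
    have hr : 0 < (∏ k ∈ Finset.range d, r j k) / d.factorial :=
      div_pos (Finset.prod_pos (hrpos j)) (by positivity)
    exact mul_nonneg (mul_nonneg (hnonneg j) hr.le) hcos.le
  have hterm0 : 0 < h j0 * ((∏ k ∈ Finset.range d, r j0 k) / d.factorial) *
      Real.cos (S j0 - d * φ / 2) := by
    have hcos : 0 < Real.cos (S j0 - d * φ / 2) :=
      Real.cos_pos_of_mem_Ioo ⟨by linarith [(abs_lt.mp (hSb j0)).1], (abs_lt.mp (hSb j0)).2⟩
    have hr : 0 < (∏ k ∈ Finset.range d, r j0 k) / d.factorial :=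
      div_pos (Finset.prod_pos (hrpos j0)) (by positivity)
    have hh : 0 < h j0 := lt_of_le_of_ne (hnonneg j0) (Ne.symm hj0')
    exact mul_pos (mul_pos hh hr) hcos
  have hpos : 0 < ∑ j : Fin (d + 1),
      h j * ((∏ k ∈ Finset.range d, r j k) / d.factorial) * Real.cos (S j - d * φ / 2) :=
    Finset.sum_pos' (fun j _ => hterm j) ⟨j0, Finset.mem_univ _, hterm0⟩
  linarith [hkey]
end

section
/- For d \ge 2, no SNN polynomial of degree d has a root z with Re(z) < -d and |Arg(-(z + d))| < \pi/d (the open pointed cone with vertex -d, angular width 2\pi/d, bisecting ray (-\infty, -d)). -/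
section Aux

open Complex Finset Real

lemma arg_re_nonneg' (x : ℂ) (hx : 0 ≤ x.re) :
    x.arg = Real.arcsin (x.im / ‖x‖) := by
  rw [Complex.arg, if_pos hx]

lemma factor_bound {w : ℂ} (hre : 0 < w.re) (him : 0 ≤ w.im) {m : ℝ} (hm : 0 ≤ m) :
    w + (m : ℂ) ≠ 0 ∧ 0 ≤ (w + (m : ℂ)).arg ∧ (w + (m : ℂ)).arg ≤ w.arg := by
  have hre' : 0 < (w + (m : ℂ)).re := by simp; linarith
  have him' : (w + (m : ℂ)).im = w.im := by simp
  refine ⟨?_, ?_, ?_⟩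
  · intro h0; rw [h0] at hre'; simp at hre'
  · rw [Complex.arg_nonneg_iff, him']; exact him
  · rw [arg_re_nonneg' _ hre'.le, arg_re_nonneg' _ hre.le, him']
    apply Real.monotone_arcsin
    have hw : 0 < ‖w‖ := by
      apply norm_pos_iff.mpr; intro h0; rw [h0] at hre; simp at hre
    have hw' : ‖w‖ ≤ ‖w + (m : ℂ)‖ := by
      have := Complex.sq_norm w
      have := Complex.sq_norm (w + (m : ℂ))
      nlinarith [norm_nonneg (w + (m : ℂ)), Complex.normSq_apply w,
        Complex.normSq_apply (w + (m : ℂ)), Complex.add_re w m, Complex.add_im w m,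
        Complex.ofReal_re m, Complex.ofReal_im m]
    exact div_le_div_of_nonneg_left him hw hw' |>.trans_eq rfl

lemma prod_arg_bound (A : ℝ) (hA : 0 ≤ A) (f : ℕ → ℂ) :
    ∀ n : ℕ, (n : ℝ) * A < Real.pi →
      (∀ k < n, f k ≠ 0 ∧ 0 ≤ (f k).arg ∧ (f k).arg ≤ A) →
      (∏ k ∈ Finset.range n, f k) ≠ 0 ∧ 0 ≤ (∏ k ∈ Finset.range n, f k).arg ∧
        (∏ k ∈ Finset.range n, f k).arg ≤ n * A := by
  intro n
  induction n with
  | zero => intro _ _; simp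
  | succ n ih =>
    intro hn hf
    have hn' : (n : ℝ) * A < Real.pi := by
      have : (n : ℝ) * A ≤ (n + 1 : ℝ) * A := by nlinarith
      push_cast at hn ⊢; linarith
    obtain ⟨hP, hP0, hPA⟩ := ih hn' (fun k hk => hf k (Nat.lt_succ_of_lt hk))
    obtain ⟨hfn, hfn0, hfnA⟩ := hf n (Nat.lt_succ_self n)
    rw [Finset.prod_range_succ]
    have hmem : (∏ k ∈ Finset.range n, f k).arg + (f n).arg ∈ Set.Ioc (-Real.pi) Real.pi := by
      constructor
      · have := Real.pi_pos; linarith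
      · push_cast at hn; linarith
    have harg := Complex.arg_mul hP hfn hmem
    refine ⟨mul_ne_zero hP hfn, ?_, ?_⟩
    · rw [harg]; linarith
    · rw [harg]; push_cast; linarith

lemma key_lemma (d : ℕ) (hd : 1 ≤ d) (h : Fin (d + 1) → ℝ) (hnonneg : ∀ j, 0 ≤ h j)
    (j0 : Fin (d + 1)) (hj0 : 0 < h j0) (w : ℂ) (hre : 0 < w.re) (him : 0 ≤ w.im)
    (harg : w.arg < Real.pi / d) :
    ∑ j : Fin (d + 1), (h j : ℂ) *
      ∏ k ∈ Finset.range d, (w + ((j : ℕ) : ℂ) + (k : ℂ)) ≠ 0 := by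
  set A := w.arg with hAdef
  have hA : 0 ≤ A := Complex.arg_nonneg_iff.mpr him
  have hdpos : (0 : ℝ) < d := by positivity
  have hdA : (d : ℝ) * A < Real.pi := by
    rw [lt_div_iff₀ hdpos] at harg; linarith [harg]
  set P : Fin (d + 1) → ℂ := fun j => ∏ k ∈ Finset.range d, (w + ((j : ℕ) : ℂ) + (k : ℂ))
    with hPdef
  have hP : ∀ j, P j ≠ 0 ∧ 0 ≤ (P j).arg ∧ (P j).arg ≤ d * A := by
    intro j
    apply prod_arg_bound A hA _ d hdA
    intro k hk
    have : w + ((j : ℕ) : ℂ) + (k : ℂ) = w + (((j : ℕ) + k : ℝ) : ℂ) := by push_cast; ring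
    rw [this]
    exact factor_bound hre him (by positivity)
  set B := (d : ℝ) * A / 2 with hBdef
  have hF : ∀ j, 0 < (P j).re * Real.cos B + (P j).im * Real.sin B := by
    intro j
    obtain ⟨hPj, hPj0, hPjA⟩ := hP j
    have habs : 0 < ‖P j‖ := norm_pos_iff.mpr hPj
    have h1 : (P j).re = ‖P j‖ * Real.cos (P j).arg :=
      (Complex.norm_mul_cos_arg (P j)).symm
    have h2 : (P j).im = ‖P j‖ * Real.sin (P j).arg :=
      (Complex.norm_mul_sin_arg (P j)).symm
    rw [h1, h2]
    have : ‖P j‖ * Real.cos (P j).arg * Real.cos B +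
        ‖P j‖ * Real.sin (P j).arg * Real.sin B =
        ‖P j‖ * Real.cos ((P j).arg - B) := by
      rw [Real.cos_sub]; ring
    rw [this]
    apply mul_pos habs
    apply Real.cos_pos_of_mem_Ioo
    constructor <;> simp only [hBdef] <;> linarith
  intro hsum
  have hre0 : ∑ j : Fin (d + 1), h j * (P j).re = 0 := by
    have := congrArg Complex.re hsum
    simpa [Complex.re_sum, Complex.mul_re] using this
  have him0 : ∑ j : Fin (d + 1), h j * (P j).im = 0 := by
    have := congrArg Complex.im hsum
    simpa [Complex.im_sum, Complex.mul_im] using this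
  have hpos : 0 < ∑ j : Fin (d + 1), h j * ((P j).re * Real.cos B + (P j).im * Real.sin B) := by
    apply Finset.sum_pos'
    · intro j _; exact mul_nonneg (hnonneg j) (hF j).le
    · exact ⟨j0, Finset.mem_univ j0, mul_pos hj0 (hF j0)⟩
  have heq : ∑ j : Fin (d + 1), h j * ((P j).re * Real.cos B + (P j).im * Real.sin B)
      = (∑ j : Fin (d + 1), h j * (P j).re) * Real.cos B
        + (∑ j : Fin (d + 1), h j * (P j).im) * Real.sin B := by
    rw [Finset.sum_mul, Finset.sum_mul, ← Finset.sum_add_distrib]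
    congr 1; ext j; ring
  rw [heq, hre0, him0] at hpos
  simp at hpos

end Aux

/-- For `d ≥ 2`, no SNN polynomial of degree `d` has a root in the open pointed cone
with vertex `-d`, angular width `2π/d`, bisecting ray `(-∞, -d)`. -/
theorem stmt_5 (d : ℕ) (hd : 2 ≤ d) (h : Fin (d + 1) → ℝ)
    (hnonneg : ∀ j, 0 ≤ h j) (hne : h ≠ 0) (z : ℂ)
    (hroot : ∑ j : Fin (d + 1), (h j : ℂ) * binomC d (j : ℕ) z = 0) :
    ¬(z.re < -(d : ℝ) ∧ |Complex.arg (-(z + (d : ℂ)))| < Real.pi / d) := by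
  rintro ⟨hzre, hzarg⟩
  set w : ℂ := -(z + (d : ℂ)) with hwdef
  have hd1 : 1 ≤ d := le_trans (by norm_num) hd
  have hwre : 0 < w.re := by
    simp only [hwdef, Complex.neg_re, Complex.add_re, Complex.natCast_re]
    linarith
  obtain ⟨j0, hj0ne⟩ := Function.ne_iff.mp hne
  have hj0 : 0 < h j0 := lt_of_le_of_ne (hnonneg j0) (Ne.symm (by simpa using hj0ne))
  -- rewrite hroot
  have hfac : ∀ (j k : ℕ), z + (d : ℂ) - (j : ℂ) - (k : ℂ) = -(w + (j : ℂ) + (k : ℂ)) := by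
    intro j k; rw [hwdef]; ring
  have hS : ∑ j : Fin (d + 1), (h j : ℂ) *
      ∏ k ∈ Finset.range d, (w + ((j : ℕ) : ℂ) + (k : ℂ)) = 0 := by
    have expand : ∀ j : Fin (d + 1), binomC d (j : ℕ) z =
        ((-1 : ℂ) ^ d / (d.factorial : ℂ)) *
          ∏ k ∈ Finset.range d, (w + ((j : ℕ) : ℂ) + (k : ℂ)) := by
      intro j
      rw [binomC]
      rw [show (∏ k ∈ Finset.range d, (z + (d : ℂ) - ((j : ℕ) : ℂ) - (k : ℂ)))
          = ∏ k ∈ Finset.range d, (-1 : ℂ) * (w + ((j : ℕ) : ℂ) + (k : ℂ)) by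
        apply Finset.prod_congr rfl; intro k _; rw [hfac]; ring]
      rw [Finset.prod_mul_distrib, Finset.prod_const, Finset.card_range]
      ring
    have : ∑ j : Fin (d + 1), (h j : ℂ) * binomC d (j : ℕ) z =
        ((-1 : ℂ) ^ d / (d.factorial : ℂ)) * ∑ j : Fin (d + 1), (h j : ℂ) *
          ∏ k ∈ Finset.range d, (w + ((j : ℕ) : ℂ) + (k : ℂ)) := by
      rw [Finset.mul_sum]
      apply Finset.sum_congr rfl
      intro j _; rw [expand j]; ring
    rw [this] at hroot
    have hne' : ((-1 : ℂ) ^ d / (d.factorial : ℂ)) ≠ 0 := by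
      apply div_ne_zero
      · exact pow_ne_zero _ (by norm_num)
      · exact_mod_cast Nat.cast_ne_zero.mpr (Nat.factorial_ne_zero d)
    exact (mul_eq_zero.mp hroot).resolve_left hne'
  by_cases him : 0 ≤ w.im
  · have harg : w.arg < Real.pi / d := by
      rw [_root_.abs_of_nonneg (Complex.arg_nonneg_iff.mpr him)] at hzarg
      exact hzarg
    exact key_lemma d hd1 h hnonneg j0 hj0 w hwre him harg hS
  · push_neg at him
    set w' : ℂ := (starRingEnd ℂ) w with hw'def
    have hS' : ∑ j : Fin (d + 1), (h j : ℂ) *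
        ∏ k ∈ Finset.range d, (w' + ((j : ℕ) : ℂ) + (k : ℂ)) = 0 := by
      have := congrArg (starRingEnd ℂ) hS
      simpa [map_sum, map_mul, map_prod, map_add, Complex.conj_ofReal] using this
    have hw're : 0 < w'.re := by simpa [hw'def] using hwre
    have hw'im : 0 ≤ w'.im := by simp [hw'def]; linarith
    have hargw : w.arg < 0 := Complex.arg_neg_iff.mpr him
    have harg' : w'.arg < Real.pi / d := by
      rw [hw'def, Complex.arg_conj, if_neg (by linarith [Real.pi_pos])]
      calc -w.arg ≤ |w.arg| := neg_le_abs _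
        _ < Real.pi / d := hzarg
    exact key_lemma d hd1 h hnonneg j0 hj0 w' hw're hw'im harg' hS'
end

section
/- If z is a complex number with Re(z) > d-1 and |Arg(z - (d-1))| < \pi/d (where d \ge 2), then for each j with 0 \le j \le d-1, the difference between the arguments of the complex numbers \binom{z+d-j}{d} and \binom{z+d-j-1}{d} is strictly less than \pi/d. -/
lemma arg_eq_arctan' {x : ℂ} (hx : 0 < x.re) :
    Complex.arg x = Real.arctan (x.im / x.re) := by
  have h := Complex.abs_arg_lt_pi_div_two_iff.mpr (Or.inl hx)
  rw [abs_lt] at h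
  rw [← Complex.tan_arg, Real.arctan_tan (by linarith [h.1]) h.2]

lemma aux_ineq {dd Rw Rb tt : ℝ} (hd : 0 < dd) (hRw : 0 < Rw) (hRb : Rw ≤ Rb) :
    dd * Rw ≤ (Rb + dd) * Rb + tt * tt := by
  nlinarith [mul_self_nonneg Rb, mul_self_nonneg tt]

lemma abs_arctan' (x : ℝ) : |Real.arctan x| = Real.arctan |x| := by
  rcases le_or_gt 0 x with h | h
  · rw [abs_of_nonneg h, abs_of_nonneg]
    simpa using Real.arctan_strictMono.monotone h
  · rw [abs_of_neg h, abs_of_neg, ← Real.arctan_neg]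
    simpa using Real.arctan_strictMono h

/-- If `z` lies in the open cone with vertex `d-1`, angular width `2π/d` and bisecting
ray `(d-1,∞)` (with `d ≥ 2`), then for each `0 ≤ j ≤ d-1` the difference between the
arguments of `C(z+d-j,d)` and `C(z+d-j-1,d)` is strictly less than `π/d`. -/
theorem stmt_6 (d : ℕ) (hd : 2 ≤ d) (z : ℂ)
    (hre : (d : ℝ) - 1 < z.re) (harg : |Complex.arg (z - ((d : ℂ) - 1))| < Real.pi / d)
    (j : ℕ) (hj : j ≤ d - 1) :
    |Complex.arg (binomC d j z / binomC d (j + 1) z)| < Real.pi / d := by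
  have hd0 : (0:ℝ) < d := by positivity
  have hjd : (j:ℝ) ≤ (d:ℝ) - 1 := by
    have h1 : (j:ℝ) ≤ ((d-1 : ℕ) : ℝ) := by exact_mod_cast hj
    rwa [Nat.cast_sub (by omega), Nat.cast_one] at h1
  set f : ℕ → ℂ := fun k => z + (d:ℂ) - (j:ℂ) - (k:ℂ) with hf
  have hfac : ∀ k : ℕ, k ≤ d → f k ≠ 0 := by
    intro k hk
    have hkr : (k:ℝ) ≤ d := by exact_mod_cast hk
    have hpos : 0 < (f k).re := by
      simp only [hf, Complex.sub_re, Complex.add_re, Complex.natCast_re]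
      linarith
    intro h
    rw [h] at hpos; simp at hpos
  have hprod1 : binomC d j z = (∏ k ∈ Finset.range d, f k) / d.factorial := rfl
  have hshift : binomC d (j+1) z = (∏ k ∈ Finset.range d, f (k+1)) / d.factorial := by
    unfold binomC
    congr 1
    apply Finset.prod_congr rfl
    intro k _
    simp only [hf]
    push_cast
    ring
  have key : (∏ k ∈ Finset.range d, f k) * f d
      = f 0 * ∏ k ∈ Finset.range d, f (k+1) := by
    rw [← Finset.prod_range_succ, Finset.prod_range_succ']
    ring
  have hne2 : (∏ k ∈ Finset.range d, f (k+1)) ≠ 0 := by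
    rw [Finset.prod_ne_zero_iff]
    intro k hk
    exact hfac (k+1) (Finset.mem_range.mp hk)
  have hfd : f d ≠ 0 := hfac d le_rfl
  have hfact : (d.factorial : ℂ) ≠ 0 := by exact_mod_cast d.factorial_ne_zero
  have hratio : binomC d j z / binomC d (j + 1) z = f 0 / f d := by
    rw [hprod1, hshift, div_div_div_comm, div_self hfact, div_one,
      div_eq_div_iff hne2 hfd]
    linear_combination key
  rw [hratio]
  -- set up real quantities
  set t := z.im with ht
  set Ra : ℝ := z.re + d - j with hRa
  set Rb : ℝ := z.re - j with hRb
  set Rw : ℝ := z.re - ((d:ℝ) - 1) with hRw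
  have hRwpos : 0 < Rw := by simp [hRw]; linarith
  have hRbpos : 0 < Rb := by simp [hRb]; linarith
  have hRapos : 0 < Ra := by simp [hRa]; linarith
  have ha_re : (f 0).re = Ra := by
    simp [hf, Complex.sub_re, Complex.add_re, hRa]
  have ha_im : (f 0).im = t := by
    simp [hf, Complex.sub_im, Complex.add_im, ht]
  have hb_re : (f d).re = Rb := by
    simp [hf, Complex.sub_re, Complex.add_re, hRb]; ring
  have hb_im : (f d).im = t := by
    simp [hf, Complex.sub_im, Complex.add_im, ht]
  have hw_re : (z - ((d:ℂ) - 1)).re = Rw := by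
    simp [Complex.sub_re, hRw]
  have hw_im : (z - ((d:ℂ) - 1)).im = t := by
    simp [Complex.sub_im, ht]
  -- arg of w
  have hargw : Complex.arg (z - ((d:ℂ) - 1)) = Real.arctan (t / Rw) := by
    rw [arg_eq_arctan' (by rw [hw_re]; exact hRwpos), hw_re, hw_im]
  rw [hargw] at harg
  -- the quotient
  have hnormsq : 0 < Complex.normSq (f d) := Complex.normSq_pos.mpr hfd
  have hq_re : (f 0 / f d).re = (Ra * Rb + t * t) / Complex.normSq (f d) := by
    rw [Complex.div_re, ha_re, ha_im, hb_re, hb_im]; ring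
  have hq_im : (f 0 / f d).im = (t * Rb - Ra * t) / Complex.normSq (f d) := by
    rw [Complex.div_im, ha_re, ha_im, hb_re, hb_im]; ring
  have hden : 0 < Ra * Rb + t * t := by nlinarith
  have hq_repos : 0 < (f 0 / f d).re := by
    rw [hq_re]; positivity
  have hargq : Complex.arg (f 0 / f d)
      = Real.arctan (-(t * d) / (Ra * Rb + t * t)) := by
    rw [arg_eq_arctan' hq_repos, hq_re, hq_im]
    congr 1
    have hRab : t * Rb - Ra * t = -(t * d) := by rw [hRa, hRb]; ring
    rw [hRab]
    field_simp
  rw [hargq, abs_arctan']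
  have habs : |(-(t * d) / (Ra * Rb + t * t))| = |t| * d / (Ra * Rb + t * t) := by
    rw [abs_div, abs_of_pos hden, abs_neg, abs_mul, Nat.abs_cast]
  rw [habs]
  have hle : |t| * d / (Ra * Rb + t * t) ≤ |t| / Rw := by
    rw [div_le_div_iff₀ hden hRwpos]
    have habs0 : 0 ≤ |t| := abs_nonneg t
    have hRbRw : Rw ≤ Rb := by rw [hRb, hRw]; linarith
    have hRa' : Ra * Rb = (Rb + (d:ℝ)) * Rb := by rw [hRa, hRb]; ring
    have h1 : (d:ℝ) * Rw ≤ Ra * Rb + t * t := by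
      have h2 := aux_ineq hd0 hRwpos hRbRw (tt := t)
      linarith
    calc |t| * (d:ℝ) * Rw = |t| * ((d:ℝ) * Rw) := by ring
      _ ≤ |t| * (Ra * Rb + t * t) := mul_le_mul_of_nonneg_left h1 habs0
  calc Real.arctan (|t| * d / (Ra * Rb + t * t))
      ≤ Real.arctan (|t| / Rw) := Real.arctan_strictMono.monotone hle
    _ = |Real.arctan (t / Rw)| := by rw [abs_arctan', abs_div, abs_of_pos hRwpos]
    _ < Real.pi / d := harg
end

section
/- Every root of a degree 3 SNN polynomial z satisfies -3 \le Re(z) \le 2. -/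
private lemma auxA (h0 h1 h2 h3 x : ℝ) (n0 : 0 ≤ h0) (n1 : 0 ≤ h1) (n2 : 0 ≤ h2) (n3 : 0 ≤ h3)
    (hs : 0 < h0 + h1 + h2 + h3) (hc : x < -3)
    (hRe : h0*((x+2)^3-(x+2)) + h1*((x+1)^3-(x+1)) + h2*(x^3-x) + h3*((x-1)^3-(x-1)) = 0) :
    False := by
  have q1 : (0:ℝ) ≤ ((x+2)^3-(x+2)) - ((x+1)^3-(x+1)) := by nlinarith [sq_nonneg (x+3)]
  have q2 : (0:ℝ) ≤ ((x+2)^3-(x+2)) - (x^3-x) := by nlinarith [sq_nonneg (x+1)]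
  have q3 : (0:ℝ) ≤ ((x+2)^3-(x+2)) - ((x-1)^3-(x-1)) := by nlinarith [sq_nonneg (2*x+1)]
  have hneg : (x+2)^3-(x+2) < 0 := by
    nlinarith [mul_pos (mul_pos (show (0:ℝ) < -(x+1) by linarith) (show (0:ℝ) < -(x+2) by linarith))
      (show (0:ℝ) < -(x+3) by linarith)]
  nlinarith [mul_nonneg n1 q1, mul_nonneg n2 q2, mul_nonneg n3 q3,
    mul_pos hs (show (0:ℝ) < -((x+2)^3-(x+2)) by linarith)]

private lemma auxB (h0 h1 h2 h3 x : ℝ) (n0 : 0 ≤ h0) (n1 : 0 ≤ h1) (n2 : 0 ≤ h2) (n3 : 0 ≤ h3)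
    (hs : 0 < h0 + h1 + h2 + h3) (hc : 2 < x)
    (hRe : h0*((x+2)^3-(x+2)) + h1*((x+1)^3-(x+1)) + h2*(x^3-x) + h3*((x-1)^3-(x-1)) = 0) :
    False := by
  have q0 : (0:ℝ) ≤ ((x+2)^3-(x+2)) - ((x-1)^3-(x-1)) := by nlinarith [sq_nonneg (2*x+1)]
  have q1 : (0:ℝ) ≤ ((x+1)^3-(x+1)) - ((x-1)^3-(x-1)) := by nlinarith [sq_nonneg x]
  have q2 : (0:ℝ) ≤ (x^3-x) - ((x-1)^3-(x-1)) := by nlinarith [sq_nonneg (x-2)]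
  have hpos : 0 < (x-1)^3-(x-1) := by
    nlinarith [mul_pos (mul_pos (show (0:ℝ) < x-2 by linarith) (show (0:ℝ) < x-1 by linarith))
      (show (0:ℝ) < x by linarith)]
  nlinarith [mul_nonneg n0 q0, mul_nonneg n1 q1, mul_nonneg n2 q2, mul_pos hs hpos]

set_option maxHeartbeats 2000000 in
private lemma auxC (h0 h1 h2 h3 x : ℝ) (n0 : 0 ≤ h0) (n1 : 0 ≤ h1) (n2 : 0 ≤ h2) (n3 : 0 ≤ h3)
    (hs : 0 < h0 + h1 + h2 + h3) (hc : x < -3)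
    (hF : (h0+h1+h2+h3) * (h0*((x+2)^3+2*(x+2)) + h1*((x+1)^3+2*(x+1))
        + h2*(x^3+2*x) + h3*((x-1)^3+2*(x-1)))
      - 9*(h0*(x+2)+h1*(x+1)+h2*x+h3*(x-1))
        * (h0*(x+2)^2+h1*(x+1)^2+h2*x^2+h3*(x-1)^2) = 0) : False := by
  have c0 : (0:ℝ) ≤ 2*(x+2) - 8*(x+2)^3 - 6 := by
    linarith [mul_nonneg (show (0:ℝ) ≤ -(x+3) by linarith) (sq_nonneg (2*x+3)),
      show (0:ℝ) ≤ -(x+3) by linarith]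
  have c1 : (0:ℝ) ≤ 2*(x+1) - 8*(x+1)^3 - 6 := by
    linarith [mul_nonneg (show (0:ℝ) ≤ -(x+2) by linarith) (sq_nonneg (2*x+1)),
      show (0:ℝ) ≤ -(x+2) by linarith]
  have c2 : (0:ℝ) ≤ 2*x - 8*x^3 - 6 := by
    linarith [mul_nonneg (show (0:ℝ) ≤ -(x+1) by linarith) (sq_nonneg (2*x-1)),
      show (0:ℝ) ≤ -(x+1) by linarith]
  have c3 : (0:ℝ) ≤ 2*(x-1) - 8*(x-1)^3 - 6 := by
    linarith [mul_nonneg (show (0:ℝ) ≤ -x by linarith) (sq_nonneg (2*x-3)),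
      show (0:ℝ) ≤ -x by linarith]
  have d0 : 6 * h0^2 ≤ h0^2 * (2*(x+2) - 8*(x+2)^3) := by
    linarith [mul_nonneg (sq_nonneg h0) c0]
  have d1 : 6 * h1^2 ≤ h1^2 * (2*(x+1) - 8*(x+1)^3) := by
    linarith [mul_nonneg (sq_nonneg h1) c1]
  have d2 : 6 * h2^2 ≤ h2^2 * (2*x - 8*x^3) := by
    linarith [mul_nonneg (sq_nonneg h2) c2]
  have d3 : 6 * h3^2 ≤ h3^2 * (2*(x-1) - 8*(x-1)^3) := by
    linarith [mul_nonneg (sq_nonneg h3) c3]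
  have b01 : (0:ℝ) ≤ (-(2*x+3)) * (8*(x+2)*(x+1)-3) :=
    mul_nonneg (by linarith) (by nlinarith [sq_nonneg (x+3)])
  have b02 : (0:ℝ) ≤ (-(2*x+2)) * (8*(x+2)*x-6) :=
    mul_nonneg (by linarith) (by nlinarith [sq_nonneg (x+3)])
  have b03 : (0:ℝ) ≤ (-(2*x+1)) * (8*(x+2)*(x-1)-11) :=
    mul_nonneg (by linarith) (by nlinarith [sq_nonneg (x+3)])
  have b12 : (0:ℝ) ≤ (-(2*x+1)) * (8*(x+1)*x-3) :=
    mul_nonneg (by linarith) (by nlinarith [sq_nonneg (x+3)])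
  have b13 : (0:ℝ) ≤ (-(2*x)) * (8*(x+1)*(x-1)-6) :=
    mul_nonneg (by linarith) (by nlinarith [sq_nonneg (x+3)])
  have b23 : (0:ℝ) ≤ (-(2*x-1)) * (8*x*(x-1)-3) :=
    mul_nonneg (by linarith) (by nlinarith [sq_nonneg (x+3)])
  have p01 : 0 ≤ h0 * h1 * (((x+2)+(x+1))*(1 - 8*(x+2)*(x+1) + 2)) := by
    linarith [mul_nonneg (mul_nonneg n0 n1) b01]
  have p02 : 0 ≤ h0 * h2 * (((x+2)+x)*(4 - 8*(x+2)*x + 2)) := by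
    linarith [mul_nonneg (mul_nonneg n0 n2) b02]
  have p03 : 0 ≤ h0 * h3 * (((x+2)+(x-1))*(9 - 8*(x+2)*(x-1) + 2)) := by
    linarith [mul_nonneg (mul_nonneg n0 n3) b03]
  have p12 : 0 ≤ h1 * h2 * (((x+1)+x)*(1 - 8*(x+1)*x + 2)) := by
    linarith [mul_nonneg (mul_nonneg n1 n2) b12]
  have p13 : 0 ≤ h1 * h3 * (((x+1)+(x-1))*(4 - 8*(x+1)*(x-1) + 2)) := by
    linarith [mul_nonneg (mul_nonneg n1 n3) b13]
  have p23 : 0 ≤ h2 * h3 * ((x+(x-1))*(1 - 8*x*(x-1) + 2)) := by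
    linarith [mul_nonneg (mul_nonneg n2 n3) b23]
  linarith [hF, d0, d1, d2, d3, p01, p02, p03, p12, p13, p23, mul_pos hs hs,
    sq_nonneg (h0 - h1), sq_nonneg (h0 - h2), sq_nonneg (h0 - h3),
    sq_nonneg (h1 - h2), sq_nonneg (h1 - h3), sq_nonneg (h2 - h3)]

set_option maxHeartbeats 2000000 in
private lemma auxD (h0 h1 h2 h3 x : ℝ) (n0 : 0 ≤ h0) (n1 : 0 ≤ h1) (n2 : 0 ≤ h2) (n3 : 0 ≤ h3)
    (hs : 0 < h0 + h1 + h2 + h3) (hc : 2 < x)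
    (hF : (h0+h1+h2+h3) * (h0*((x+2)^3+2*(x+2)) + h1*((x+1)^3+2*(x+1))
        + h2*(x^3+2*x) + h3*((x-1)^3+2*(x-1)))
      - 9*(h0*(x+2)+h1*(x+1)+h2*x+h3*(x-1))
        * (h0*(x+2)^2+h1*(x+1)^2+h2*x^2+h3*(x-1)^2) = 0) : False := by
  have c0 : (0:ℝ) ≤ 8*(x+2)^3 - 2*(x+2) - 6 := by
    linarith [mul_nonneg (show (0:ℝ) ≤ x+1 by linarith) (sq_nonneg (2*x+5)),
      show (0:ℝ) ≤ x+1 by linarith]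
  have c1 : (0:ℝ) ≤ 8*(x+1)^3 - 2*(x+1) - 6 := by
    linarith [mul_nonneg (show (0:ℝ) ≤ x by linarith) (sq_nonneg (2*x+3)),
      show (0:ℝ) ≤ x by linarith]
  have c2 : (0:ℝ) ≤ 8*x^3 - 2*x - 6 := by
    linarith [mul_nonneg (show (0:ℝ) ≤ x-1 by linarith) (sq_nonneg (2*x+1)),
      show (0:ℝ) ≤ x-1 by linarith]
  have c3 : (0:ℝ) ≤ 8*(x-1)^3 - 2*(x-1) - 6 := by
    linarith [mul_nonneg (show (0:ℝ) ≤ x-2 by linarith) (sq_nonneg (2*x-1)),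
      show (0:ℝ) ≤ x-2 by linarith]
  have d0 : h0^2 * (2*(x+2) - 8*(x+2)^3) ≤ -6 * h0^2 := by
    linarith [mul_nonneg (sq_nonneg h0) c0]
  have d1 : h1^2 * (2*(x+1) - 8*(x+1)^3) ≤ -6 * h1^2 := by
    linarith [mul_nonneg (sq_nonneg h1) c1]
  have d2 : h2^2 * (2*x - 8*x^3) ≤ -6 * h2^2 := by
    linarith [mul_nonneg (sq_nonneg h2) c2]
  have d3 : h3^2 * (2*(x-1) - 8*(x-1)^3) ≤ -6 * h3^2 := by
    linarith [mul_nonneg (sq_nonneg h3) c3]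
  have b01 : (0:ℝ) ≤ (2*x+3) * (8*(x+2)*(x+1)-3) :=
    mul_nonneg (by linarith) (by nlinarith [sq_nonneg (x-2)])
  have b02 : (0:ℝ) ≤ (2*x+2) * (8*(x+2)*x-6) :=
    mul_nonneg (by linarith) (by nlinarith [sq_nonneg (x-2)])
  have b03 : (0:ℝ) ≤ (2*x+1) * (8*(x+2)*(x-1)-11) :=
    mul_nonneg (by linarith) (by nlinarith [sq_nonneg (x-2)])
  have b12 : (0:ℝ) ≤ (2*x+1) * (8*(x+1)*x-3) :=
    mul_nonneg (by linarith) (by nlinarith [sq_nonneg (x-2)])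
  have b13 : (0:ℝ) ≤ (2*x) * (8*(x+1)*(x-1)-6) :=
    mul_nonneg (by linarith) (by nlinarith [sq_nonneg (x-2)])
  have b23 : (0:ℝ) ≤ (2*x-1) * (8*x*(x-1)-3) :=
    mul_nonneg (by linarith) (by nlinarith [sq_nonneg (x-2)])
  have p01 : h0 * h1 * (((x+2)+(x+1))*(1 - 8*(x+2)*(x+1) + 2)) ≤ 0 := by
    linarith [mul_nonneg (mul_nonneg n0 n1) b01]
  have p02 : h0 * h2 * (((x+2)+x)*(4 - 8*(x+2)*x + 2)) ≤ 0 := by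
    linarith [mul_nonneg (mul_nonneg n0 n2) b02]
  have p03 : h0 * h3 * (((x+2)+(x-1))*(9 - 8*(x+2)*(x-1) + 2)) ≤ 0 := by
    linarith [mul_nonneg (mul_nonneg n0 n3) b03]
  have p12 : h1 * h2 * (((x+1)+x)*(1 - 8*(x+1)*x + 2)) ≤ 0 := by
    linarith [mul_nonneg (mul_nonneg n1 n2) b12]
  have p13 : h1 * h3 * (((x+1)+(x-1))*(4 - 8*(x+1)*(x-1) + 2)) ≤ 0 := by
    linarith [mul_nonneg (mul_nonneg n1 n3) b13]
  have p23 : h2 * h3 * ((x+(x-1))*(1 - 8*x*(x-1) + 2)) ≤ 0 := by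
    linarith [mul_nonneg (mul_nonneg n2 n3) b23]
  linarith [hF, d0, d1, d2, d3, p01, p02, p03, p12, p13, p23, mul_pos hs hs,
    sq_nonneg (h0 - h1), sq_nonneg (h0 - h2), sq_nonneg (h0 - h3),
    sq_nonneg (h1 - h2), sq_nonneg (h1 - h3), sq_nonneg (h2 - h3)]

set_option maxHeartbeats 1000000 in
/-- Every root `z` of a degree `3` SNN polynomial satisfies `-3 ≤ Re z ≤ 2`. -/
theorem stmt_7 (h : Fin 4 → ℝ)
    (hnonneg : ∀ j, 0 ≤ h j) (hne : h ≠ 0) (z : ℂ)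
    (hroot : ∑ j : Fin 4, (h j : ℂ) * binomC 3 (j : ℕ) z = 0) :
    -3 ≤ z.re ∧ z.re ≤ 2 := by
  have n0 := hnonneg 0; have n1 := hnonneg 1; have n2 := hnonneg 2; have n3 := hnonneg 3
  have hs : 0 < h 0 + h 1 + h 2 + h 3 := by
    by_contra hcon
    push_neg at hcon
    have e0 : h 0 = 0 := le_antisymm (by linarith) n0
    have e1 : h 1 = 0 := le_antisymm (by linarith) n1
    have e2 : h 2 = 0 := le_antisymm (by linarith) n2
    have e3 : h 3 = 0 := le_antisymm (by linarith) n3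
    apply hne
    funext j
    fin_cases j
    · exact e0
    · exact e1
    · exact e2
    · exact e3
  simp only [Fin.sum_univ_four, binomC, Finset.prod_range_succ, Finset.prod_range_zero,
    one_mul, Nat.factorial, show ((0:Fin 4):ℕ) = 0 from rfl, show ((1:Fin 4):ℕ) = 1 from rfl,
    show ((2:Fin 4):ℕ) = 2 from rfl, show ((3:Fin 4):ℕ) = 3 from rfl] at hroot
  norm_num at hroot
  have hroot' : (h 0 : ℂ) * ((z+3)*(z+2)*(z+1)) + (h 1 : ℂ) * ((z+2)*(z+1)*z)
      + (h 2 : ℂ) * ((z+1)*z*(z-1)) + (h 3 : ℂ) * (z*(z-1)*(z-2)) = 0 := by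
    field_simp at hroot
    linear_combination hroot
  set x := z.re with hx
  set y := z.im with hy
  rw [show z = (x:ℂ) + (y:ℂ)*Complex.I from (Complex.re_add_im z).symm] at hroot'
  have hre := congrArg Complex.re hroot'
  have him := congrArg Complex.im hroot'
  simp [Complex.add_re, Complex.add_im, Complex.mul_re, Complex.mul_im] at hre him
  have hRe : h 0*((x+2)^3-(x+2)-3*y^2*(x+2)) + h 1*((x+1)^3-(x+1)-3*y^2*(x+1))
      + h 2*(x^3-x-3*y^2*x) + h 3*((x-1)^3-(x-1)-3*y^2*(x-1)) = 0 := by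
    linear_combination hre
  have hIm : y*(h 0*(3*(x+2)^2-1-y^2) + h 1*(3*(x+1)^2-1-y^2)
      + h 2*(3*x^2-1-y^2) + h 3*(3*(x-1)^2-1-y^2)) = 0 := by
    linear_combination him
  clear hroot hroot' hre him hne hnonneg
  have key : ∀ x' : ℝ, x' = x → (x' < -3 → False) ∧ (2 < x' → False) := by
    intro x' hx'
    subst hx'
    rcases eq_or_ne y 0 with hy0 | hy0
    · rw [hy0] at hRe
      constructor
      · intro hc
        exact auxA (h 0) (h 1) (h 2) (h 3) x n0 n1 n2 n3 hs hc (by linear_combination hRe)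
      · intro hc
        exact auxB (h 0) (h 1) (h 2) (h 3) x n0 n1 n2 n3 hs hc (by linear_combination hRe)
    · have hA : h 0*(3*(x+2)^2-1-y^2) + h 1*(3*(x+1)^2-1-y^2)
          + h 2*(3*x^2-1-y^2) + h 3*(3*(x-1)^2-1-y^2) = 0 :=
        (mul_eq_zero.mp hIm).resolve_left hy0
      have hF : (h 0+h 1+h 2+h 3) * (h 0*((x+2)^3+2*(x+2)) + h 1*((x+1)^3+2*(x+1))
            + h 2*(x^3+2*x) + h 3*((x-1)^3+2*(x-1)))
          - 9*(h 0*(x+2)+h 1*(x+1)+h 2*x+h 3*(x-1))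
            * (h 0*(x+2)^2+h 1*(x+1)^2+h 2*x^2+h 3*(x-1)^2) = 0 := by
        linear_combination (h 0+h 1+h 2+h 3)*hRe
          - 3*(h 0*(x+2)+h 1*(x+1)+h 2*x+h 3*(x-1))*hA
      exact ⟨fun hc => auxC (h 0) (h 1) (h 2) (h 3) x n0 n1 n2 n3 hs hc hF,
             fun hc => auxD (h 0) (h 1) (h 2) (h 3) x n0 n1 n2 n3 hs hc hF⟩
  obtain ⟨k1, k2⟩ := key x rfl
  constructor
  · by_contra hc; push_neg at hc; exact k1 hc
  · by_contra hc; push_neg at hc; exact k2 hc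
end

section
/- Every root of a degree 4 SNN polynomial z satisfies -4 \le Re(z) \le 3. -/
lemma Wre (z : ℂ) : (((z - 2) * (z - 1) * (z + 1) * (z + 2)) : ℂ).re = (4) + (5) * z.im ^ 2 + (1) * z.im ^ 4 + (-5) * z.re ^ 2 + (-6) * z.re ^ 2 * z.im ^ 2 + (1) * z.re ^ 4 := by
  simp only [Complex.mul_re, Complex.mul_im, Complex.add_re, Complex.add_im, Complex.sub_re, Complex.sub_im, Complex.re_ofNat, Complex.im_ofNat, Complex.one_re, Complex.one_im]
  ring

lemma Wim (z : ℂ) : (((z - 2) * (z - 1) * (z + 1) * (z + 2)) : ℂ).im = (-10) * z.re * z.im + (-4) * z.re * z.im ^ 3 + (4) * z.re ^ 3 * z.im := by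
  simp only [Complex.mul_re, Complex.mul_im, Complex.add_re, Complex.add_im, Complex.sub_re, Complex.sub_im, Complex.re_ofNat, Complex.im_ofNat, Complex.one_re, Complex.one_im]
  ring

lemma Ppos0 (s u : ℝ) (hs : 0 < s) (hu : 0 ≤ u) :
    0 < 33600 + 1444 * u + 279 * u ^ 2 + 36 * u ^ 3 + 1 * u ^ 4 + 91040 * s + 12344 * s * u + 1078 * s * u ^ 2 + 34 * s * u ^ 3 + 98084 * s ^ 2 + 12262 * s ^ 2 * u + 564 * s ^ 2 * u ^ 2 + 4 * s ^ 2 * u ^ 3 + 56184 * s ^ 3 + 5020 * s ^ 3 * u + 102 * s ^ 3 * u ^ 2 + 19023 * s ^ 4 + 1020 * s ^ 4 * u + 6 * s ^ 4 * u ^ 2 + 3942 * s ^ 5 + 102 * s ^ 5 * u + 492 * s ^ 6 + 4 * s ^ 6 * u + 34 * s ^ 7 + 1 * s ^ 8 := by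
    have t1 : (0:ℝ) ≤ 1444 * u := mul_nonneg (by norm_num) hu
    have t2 : (0:ℝ) ≤ 279 * u ^ 2 := mul_nonneg (by norm_num) (pow_nonneg hu 2)
    have t3 : (0:ℝ) ≤ 36 * u ^ 3 := mul_nonneg (by norm_num) (pow_nonneg hu 3)
    have t4 : (0:ℝ) ≤ 1 * u ^ 4 := mul_nonneg (by norm_num) (pow_nonneg hu 4)
    have t5 : (0:ℝ) ≤ 91040 * s := mul_nonneg (by norm_num) hs.le
    have t6 : (0:ℝ) ≤ 12344 * s * u := mul_nonneg (mul_nonneg (by norm_num) hs.le) hu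
    have t7 : (0:ℝ) ≤ 1078 * s * u ^ 2 := mul_nonneg (mul_nonneg (by norm_num) hs.le) (pow_nonneg hu 2)
    have t8 : (0:ℝ) ≤ 34 * s * u ^ 3 := mul_nonneg (mul_nonneg (by norm_num) hs.le) (pow_nonneg hu 3)
    have t9 : (0:ℝ) ≤ 98084 * s ^ 2 := mul_nonneg (by norm_num) (pow_nonneg hs.le 2)
    have t10 : (0:ℝ) ≤ 12262 * s ^ 2 * u := mul_nonneg (mul_nonneg (by norm_num) (pow_nonneg hs.le 2)) hu
    have t11 : (0:ℝ) ≤ 564 * s ^ 2 * u ^ 2 := mul_nonneg (mul_nonneg (by norm_num) (pow_nonneg hs.le 2)) (pow_nonneg hu 2)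
    have t12 : (0:ℝ) ≤ 4 * s ^ 2 * u ^ 3 := mul_nonneg (mul_nonneg (by norm_num) (pow_nonneg hs.le 2)) (pow_nonneg hu 3)
    have t13 : (0:ℝ) ≤ 56184 * s ^ 3 := mul_nonneg (by norm_num) (pow_nonneg hs.le 3)
    have t14 : (0:ℝ) ≤ 5020 * s ^ 3 * u := mul_nonneg (mul_nonneg (by norm_num) (pow_nonneg hs.le 3)) hu
    have t15 : (0:ℝ) ≤ 102 * s ^ 3 * u ^ 2 := mul_nonneg (mul_nonneg (by norm_num) (pow_nonneg hs.le 3)) (pow_nonneg hu 2)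
    have t16 : (0:ℝ) ≤ 19023 * s ^ 4 := mul_nonneg (by norm_num) (pow_nonneg hs.le 4)
    have t17 : (0:ℝ) ≤ 1020 * s ^ 4 * u := mul_nonneg (mul_nonneg (by norm_num) (pow_nonneg hs.le 4)) hu
    have t18 : (0:ℝ) ≤ 6 * s ^ 4 * u ^ 2 := mul_nonneg (mul_nonneg (by norm_num) (pow_nonneg hs.le 4)) (pow_nonneg hu 2)
    have t19 : (0:ℝ) ≤ 3942 * s ^ 5 := mul_nonneg (by norm_num) (pow_nonneg hs.le 5)
    have t20 : (0:ℝ) ≤ 102 * s ^ 5 * u := mul_nonneg (mul_nonneg (by norm_num) (pow_nonneg hs.le 5)) hu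
    have t21 : (0:ℝ) ≤ 492 * s ^ 6 := mul_nonneg (by norm_num) (pow_nonneg hs.le 6)
    have t22 : (0:ℝ) ≤ 4 * s ^ 6 * u := mul_nonneg (mul_nonneg (by norm_num) (pow_nonneg hs.le 6)) hu
    have t23 : (0:ℝ) ≤ 34 * s ^ 7 := mul_nonneg (by norm_num) (pow_nonneg hs.le 7)
    have t24 : (0:ℝ) ≤ 1 * s ^ 8 := mul_nonneg (by norm_num) (pow_nonneg hs.le 8)
    linarith [t1, t2, t3, t4, t5, t6, t7, t8, t9, t10, t11, t12, t13, t14, t15, t16, t17, t18, t19, t20, t21, t22, t23, t24]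

lemma key0 (z : ℂ) (hz : 3 < z.re) :
    0 < ((z + 4) * (z + 3) * (z + 2) * (z + 1) * (starRingEnd ℂ) ((z - 2) * (z - 1) * (z + 1) * (z + 2))).re := by
  have hNre : ((z + 4) * (z + 3) * (z + 2) * (z + 1) : ℂ).re = (24) + (-35) * z.im ^ 2 + (1) * z.im ^ 4 + (50) * z.re + (-30) * z.re * z.im ^ 2 + (35) * z.re ^ 2 + (-6) * z.re ^ 2 * z.im ^ 2 + (10) * z.re ^ 3 + (1) * z.re ^ 4 := by
    simp only [Complex.mul_re, Complex.mul_im, Complex.add_re, Complex.add_im, Complex.sub_re, Complex.sub_im, Complex.re_ofNat, Complex.im_ofNat, Complex.one_re, Complex.one_im]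
    ring
  have hNim : ((z + 4) * (z + 3) * (z + 2) * (z + 1) : ℂ).im = (50) * z.im + (-10) * z.im ^ 3 + (70) * z.re * z.im + (-4) * z.re * z.im ^ 3 + (30) * z.re ^ 2 * z.im + (4) * z.re ^ 3 * z.im := by
    simp only [Complex.mul_re, Complex.mul_im, Complex.add_re, Complex.add_im, Complex.sub_re, Complex.sub_im, Complex.re_ofNat, Complex.im_ofNat, Complex.one_re, Complex.one_im]
    ring
  have hre : ((z + 4) * (z + 3) * (z + 2) * (z + 1) * (starRingEnd ℂ) ((z - 2) * (z - 1) * (z + 1) * (z + 2))).re = 33600 + 1444 * (z.im ^ 2) + 279 * (z.im ^ 2) ^ 2 + 36 * (z.im ^ 2) ^ 3 + 1 * (z.im ^ 2) ^ 4 + 91040 * (z.re - 3) + 12344 * (z.re - 3) * (z.im ^ 2) + 1078 * (z.re - 3) * (z.im ^ 2) ^ 2 + 34 * (z.re - 3) * (z.im ^ 2) ^ 3 + 98084 * (z.re - 3) ^ 2 + 12262 * (z.re - 3) ^ 2 * (z.im ^ 2) + 564 * (z.re - 3) ^ 2 * (z.im ^ 2) ^ 2 + 4 * (z.re - 3) ^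 2 * (z.im ^ 2) ^ 3 + 56184 * (z.re - 3) ^ 3 + 5020 * (z.re - 3) ^ 3 * (z.im ^ 2) + 102 * (z.re - 3) ^ 3 * (z.im ^ 2) ^ 2 + 19023 * (z.re - 3) ^ 4 + 1020 * (z.re - 3) ^ 4 * (z.im ^ 2) + 6 * (z.re - 3) ^ 4 * (z.im ^ 2) ^ 2 + 3942 * (z.re - 3) ^ 5 + 102 * (z.re - 3) ^ 5 * (z.im ^ 2) + 492 * (z.re - 3) ^ 6 + 4 * (z.re - 3) ^ 6 * (z.im ^ 2) + 34 * (z.re - 3) ^ 7 + 1 * (z.re - 3) ^ 8 := by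
    rw [Complex.mul_re, Complex.conj_re, Complex.conj_im, hNre, hNim, Wre, Wim]
    ring
  rw [hre]
  exact Ppos0 (z.re - 3) (z.im ^ 2) (by linarith) (sq_nonneg _)

lemma Ppos1 (s u : ℝ) (hs : 0 < s) (hu : 0 ≤ u) :
    0 < 14400 + 4276 * u + 723 * u ^ 2 + 48 * u ^ 3 + 1 * u ^ 4 + 41760 * s + 10920 * s * u + 1050 * s * u ^ 2 + 30 * s * u ^ 3 + 49076 * s ^ 2 + 9262 * s ^ 2 * u + 480 * s ^ 2 * u ^ 2 + 4 * s ^ 2 * u ^ 3 + 31080 * s ^ 3 + 3780 * s ^ 3 * u + 90 * s ^ 3 * u ^ 2 + 11739 * s ^ 4 + 816 * s ^ 4 * u + 6 * s ^ 4 * u ^ 2 + 2730 * s ^ 5 + 90 * s ^ 5 * u + 384 * s ^ 6 + 4 * s ^ 6 * u + 30 * s ^ 7 + 1 * s ^ 8 := by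
    have t1 : (0:ℝ) ≤ 4276 * u := mul_nonneg (by norm_num) hu
    have t2 : (0:ℝ) ≤ 723 * u ^ 2 := mul_nonneg (by norm_num) (pow_nonneg hu 2)
    have t3 : (0:ℝ) ≤ 48 * u ^ 3 := mul_nonneg (by norm_num) (pow_nonneg hu 3)
    have t4 : (0:ℝ) ≤ 1 * u ^ 4 := mul_nonneg (by norm_num) (pow_nonneg hu 4)
    have t5 : (0:ℝ) ≤ 41760 * s := mul_nonneg (by norm_num) hs.le
    have t6 : (0:ℝ) ≤ 10920 * s * u := mul_nonneg (mul_nonneg (by norm_num) hs.le) hu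
    have t7 : (0:ℝ) ≤ 1050 * s * u ^ 2 := mul_nonneg (mul_nonneg (by norm_num) hs.le) (pow_nonneg hu 2)
    have t8 : (0:ℝ) ≤ 30 * s * u ^ 3 := mul_nonneg (mul_nonneg (by norm_num) hs.le) (pow_nonneg hu 3)
    have t9 : (0:ℝ) ≤ 49076 * s ^ 2 := mul_nonneg (by norm_num) (pow_nonneg hs.le 2)
    have t10 : (0:ℝ) ≤ 9262 * s ^ 2 * u := mul_nonneg (mul_nonneg (by norm_num) (pow_nonneg hs.le 2)) hu
    have t11 : (0:ℝ) ≤ 480 * s ^ 2 * u ^ 2 := mul_nonneg (mul_nonneg (by norm_num) (pow_nonneg hs.le 2)) (pow_nonneg hu 2)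
    have t12 : (0:ℝ) ≤ 4 * s ^ 2 * u ^ 3 := mul_nonneg (mul_nonneg (by norm_num) (pow_nonneg hs.le 2)) (pow_nonneg hu 3)
    have t13 : (0:ℝ) ≤ 31080 * s ^ 3 := mul_nonneg (by norm_num) (pow_nonneg hs.le 3)
    have t14 : (0:ℝ) ≤ 3780 * s ^ 3 * u := mul_nonneg (mul_nonneg (by norm_num) (pow_nonneg hs.le 3)) hu
    have t15 : (0:ℝ) ≤ 90 * s ^ 3 * u ^ 2 := mul_nonneg (mul_nonneg (by norm_num) (pow_nonneg hs.le 3)) (pow_nonneg hu 2)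
    have t16 : (0:ℝ) ≤ 11739 * s ^ 4 := mul_nonneg (by norm_num) (pow_nonneg hs.le 4)
    have t17 : (0:ℝ) ≤ 816 * s ^ 4 * u := mul_nonneg (mul_nonneg (by norm_num) (pow_nonneg hs.le 4)) hu
    have t18 : (0:ℝ) ≤ 6 * s ^ 4 * u ^ 2 := mul_nonneg (mul_nonneg (by norm_num) (pow_nonneg hs.le 4)) (pow_nonneg hu 2)
    have t19 : (0:ℝ) ≤ 2730 * s ^ 5 := mul_nonneg (by norm_num) (pow_nonneg hs.le 5)
    have t20 : (0:ℝ) ≤ 90 * s ^ 5 * u := mul_nonneg (mul_nonneg (by norm_num) (pow_nonneg hs.le 5)) hu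
    have t21 : (0:ℝ) ≤ 384 * s ^ 6 := mul_nonneg (by norm_num) (pow_nonneg hs.le 6)
    have t22 : (0:ℝ) ≤ 4 * s ^ 6 * u := mul_nonneg (mul_nonneg (by norm_num) (pow_nonneg hs.le 6)) hu
    have t23 : (0:ℝ) ≤ 30 * s ^ 7 := mul_nonneg (by norm_num) (pow_nonneg hs.le 7)
    have t24 : (0:ℝ) ≤ 1 * s ^ 8 := mul_nonneg (by norm_num) (pow_nonneg hs.le 8)
    linarith [t1, t2, t3, t4, t5, t6, t7, t8, t9, t10, t11, t12, t13, t14, t15, t16, t17, t18, t19, t20, t21, t22, t23, t24]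

lemma key1 (z : ℂ) (hz : 3 < z.re) :
    0 < ((z + 3) * (z + 2) * (z + 1) * z * (starRingEnd ℂ) ((z - 2) * (z - 1) * (z + 1) * (z + 2))).re := by
  have hNre : ((z + 3) * (z + 2) * (z + 1) * z : ℂ).re = (-11) * z.im ^ 2 + (1) * z.im ^ 4 + (6) * z.re + (-18) * z.re * z.im ^ 2 + (11) * z.re ^ 2 + (-6) * z.re ^ 2 * z.im ^ 2 + (6) * z.re ^ 3 + (1) * z.re ^ 4 := by
    simp only [Complex.mul_re, Complex.mul_im, Complex.add_re, Complex.add_im, Complex.sub_re, Complex.sub_im, Complex.re_ofNat, Complex.im_ofNat, Complex.one_re, Complex.one_im]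
    ring
  have hNim : ((z + 3) * (z + 2) * (z + 1) * z : ℂ).im = (6) * z.im + (-6) * z.im ^ 3 + (22) * z.re * z.im + (-4) * z.re * z.im ^ 3 + (18) * z.re ^ 2 * z.im + (4) * z.re ^ 3 * z.im := by
    simp only [Complex.mul_re, Complex.mul_im, Complex.add_re, Complex.add_im, Complex.sub_re, Complex.sub_im, Complex.re_ofNat, Complex.im_ofNat, Complex.one_re, Complex.one_im]
    ring
  have hre : ((z + 3) * (z + 2) * (z + 1) * z * (starRingEnd ℂ) ((z - 2) * (z - 1) * (z + 1) * (z + 2))).re = 14400 + 4276 * (z.im ^ 2) + 723 * (z.im ^ 2) ^ 2 + 48 * (z.im ^ 2) ^ 3 + 1 * (z.im ^ 2) ^ 4 + 41760 * (z.re - 3) + 10920 * (z.re - 3) * (z.im ^ 2) + 1050 * (z.re - 3) * (z.im ^ 2) ^ 2 + 30 * (z.re - 3) * (z.im ^ 2) ^ 3 + 49076 * (z.re - 3) ^ 2 + 9262 * (z.re - 3) ^ 2 * (z.im ^ 2) + 480 * (z.re - 3) ^ 2 * (z.im ^ 2) ^ 2 + 4 * (z.re - 3) ^ 2 * (z.im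 ^ 2) ^ 3 + 31080 * (z.re - 3) ^ 3 + 3780 * (z.re - 3) ^ 3 * (z.im ^ 2) + 90 * (z.re - 3) ^ 3 * (z.im ^ 2) ^ 2 + 11739 * (z.re - 3) ^ 4 + 816 * (z.re - 3) ^ 4 * (z.im ^ 2) + 6 * (z.re - 3) ^ 4 * (z.im ^ 2) ^ 2 + 2730 * (z.re - 3) ^ 5 + 90 * (z.re - 3) ^ 5 * (z.im ^ 2) + 384 * (z.re - 3) ^ 6 + 4 * (z.re - 3) ^ 6 * (z.im ^ 2) + 30 * (z.re - 3) ^ 7 + 1 * (z.re - 3) ^ 8 := by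
    rw [Complex.mul_re, Complex.conj_re, Complex.conj_im, hNre, hNim, Wre, Wim]
    ring
  rw [hre]
  exact Ppos1 (z.re - 3) (z.im ^ 2) (by linarith) (sq_nonneg _)

lemma Ppos2 (s u : ℝ) (hs : 0 < s) (hu : 0 ≤ u) :
    0 < 4800 + 3292 * u + 699 * u ^ 2 + 48 * u ^ 3 + 1 * u ^ 4 + 15520 * s + 7084 * s * u + 842 * s * u ^ 2 + 26 * s * u ^ 3 + 20732 * s ^ 2 + 5998 * s ^ 2 * u + 384 * s ^ 2 * u ^ 2 + 4 * s ^ 2 * u ^ 3 + 15084 * s ^ 3 + 2612 * s ^ 3 * u + 78 * s ^ 3 * u ^ 2 + 6579 * s ^ 4 + 624 * s ^ 4 * u + 6 * s ^ 4 * u ^ 2 + 1770 * s ^ 5 + 78 * s ^ 5 * u + 288 * s ^ 6 + 4 * s ^ 6 * u + 26 * s ^ 7 + 1 * s ^ 8 := by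
    have t1 : (0:ℝ) ≤ 3292 * u := mul_nonneg (by norm_num) hu
    have t2 : (0:ℝ) ≤ 699 * u ^ 2 := mul_nonneg (by norm_num) (pow_nonneg hu 2)
    have t3 : (0:ℝ) ≤ 48 * u ^ 3 := mul_nonneg (by norm_num) (pow_nonneg hu 3)
    have t4 : (0:ℝ) ≤ 1 * u ^ 4 := mul_nonneg (by norm_num) (pow_nonneg hu 4)
    have t5 : (0:ℝ) ≤ 15520 * s := mul_nonneg (by norm_num) hs.le
    have t6 : (0:ℝ) ≤ 7084 * s * u := mul_nonneg (mul_nonneg (by norm_num) hs.le) hu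
    have t7 : (0:ℝ) ≤ 842 * s * u ^ 2 := mul_nonneg (mul_nonneg (by norm_num) hs.le) (pow_nonneg hu 2)
    have t8 : (0:ℝ) ≤ 26 * s * u ^ 3 := mul_nonneg (mul_nonneg (by norm_num) hs.le) (pow_nonneg hu 3)
    have t9 : (0:ℝ) ≤ 20732 * s ^ 2 := mul_nonneg (by norm_num) (pow_nonneg hs.le 2)
    have t10 : (0:ℝ) ≤ 5998 * s ^ 2 * u := mul_nonneg (mul_nonneg (by norm_num) (pow_nonneg hs.le 2)) hu
    have t11 : (0:ℝ) ≤ 384 * s ^ 2 * u ^ 2 := mul_nonneg (mul_nonneg (by norm_num) (pow_nonneg hs.le 2)) (pow_nonneg hu 2)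
    have t12 : (0:ℝ) ≤ 4 * s ^ 2 * u ^ 3 := mul_nonneg (mul_nonneg (by norm_num) (pow_nonneg hs.le 2)) (pow_nonneg hu 3)
    have t13 : (0:ℝ) ≤ 15084 * s ^ 3 := mul_nonneg (by norm_num) (pow_nonneg hs.le 3)
    have t14 : (0:ℝ) ≤ 2612 * s ^ 3 * u := mul_nonneg (mul_nonneg (by norm_num) (pow_nonneg hs.le 3)) hu
    have t15 : (0:ℝ) ≤ 78 * s ^ 3 * u ^ 2 := mul_nonneg (mul_nonneg (by norm_num) (pow_nonneg hs.le 3)) (pow_nonneg hu 2)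
    have t16 : (0:ℝ) ≤ 6579 * s ^ 4 := mul_nonneg (by norm_num) (pow_nonneg hs.le 4)
    have t17 : (0:ℝ) ≤ 624 * s ^ 4 * u := mul_nonneg (mul_nonneg (by norm_num) (pow_nonneg hs.le 4)) hu
    have t18 : (0:ℝ) ≤ 6 * s ^ 4 * u ^ 2 := mul_nonneg (mul_nonneg (by norm_num) (pow_nonneg hs.le 4)) (pow_nonneg hu 2)
    have t19 : (0:ℝ) ≤ 1770 * s ^ 5 := mul_nonneg (by norm_num) (pow_nonneg hs.le 5)
    have t20 : (0:ℝ) ≤ 78 * s ^ 5 * u := mul_nonneg (mul_nonneg (by norm_num) (pow_nonneg hs.le 5)) hu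
    have t21 : (0:ℝ) ≤ 288 * s ^ 6 := mul_nonneg (by norm_num) (pow_nonneg hs.le 6)
    have t22 : (0:ℝ) ≤ 4 * s ^ 6 * u := mul_nonneg (mul_nonneg (by norm_num) (pow_nonneg hs.le 6)) hu
    have t23 : (0:ℝ) ≤ 26 * s ^ 7 := mul_nonneg (by norm_num) (pow_nonneg hs.le 7)
    have t24 : (0:ℝ) ≤ 1 * s ^ 8 := mul_nonneg (by norm_num) (pow_nonneg hs.le 8)
    linarith [t1, t2, t3, t4, t5, t6, t7, t8, t9, t10, t11, t12, t13, t14, t15, t16, t17, t18, t19, t20, t21, t22, t23, t24]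

lemma key2 (z : ℂ) (hz : 3 < z.re) :
    0 < ((z + 2) * (z + 1) * z * (z - 1) * (starRingEnd ℂ) ((z - 2) * (z - 1) * (z + 1) * (z + 2))).re := by
  have hNre : ((z + 2) * (z + 1) * z * (z - 1) : ℂ).re = (1) * z.im ^ 2 + (1) * z.im ^ 4 + (-2) * z.re + (-6) * z.re * z.im ^ 2 + (-1) * z.re ^ 2 + (-6) * z.re ^ 2 * z.im ^ 2 + (2) * z.re ^ 3 + (1) * z.re ^ 4 := by
    simp only [Complex.mul_re, Complex.mul_im, Complex.add_re, Complex.add_im, Complex.sub_re, Complex.sub_im, Complex.re_ofNat, Complex.im_ofNat, Complex.one_re, Complex.one_im]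
    ring
  have hNim : ((z + 2) * (z + 1) * z * (z - 1) : ℂ).im = (-2) * z.im + (-2) * z.im ^ 3 + (-2) * z.re * z.im + (-4) * z.re * z.im ^ 3 + (6) * z.re ^ 2 * z.im + (4) * z.re ^ 3 * z.im := by
    simp only [Complex.mul_re, Complex.mul_im, Complex.add_re, Complex.add_im, Complex.sub_re, Complex.sub_im, Complex.re_ofNat, Complex.im_ofNat, Complex.one_re, Complex.one_im]
    ring
  have hre : ((z + 2) * (z + 1) * z * (z - 1) * (starRingEnd ℂ) ((z - 2) * (z - 1) * (z + 1) * (z + 2))).re = 4800 + 3292 * (z.im ^ 2) + 699 * (z.im ^ 2) ^ 2 + 48 * (z.im ^ 2) ^ 3 + 1 * (z.im ^ 2) ^ 4 + 15520 * (z.re - 3) + 7084 * (z.re - 3) * (z.im ^ 2) + 842 * (z.re - 3) * (z.im ^ 2) ^ 2 + 26 * (z.re - 3) * (z.im ^ 2) ^ 3 + 20732 * (z.re - 3) ^ 2 + 5998 * (z.re - 3) ^ 2 * (z.im ^ 2) + 384 * (z.re - 3) ^ 2 * (z.im ^ 2) ^ 2 + 4 * (z.re - 3) ^ 2 * (z.im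 ^ 2) ^ 3 + 15084 * (z.re - 3) ^ 3 + 2612 * (z.re - 3) ^ 3 * (z.im ^ 2) + 78 * (z.re - 3) ^ 3 * (z.im ^ 2) ^ 2 + 6579 * (z.re - 3) ^ 4 + 624 * (z.re - 3) ^ 4 * (z.im ^ 2) + 6 * (z.re - 3) ^ 4 * (z.im ^ 2) ^ 2 + 1770 * (z.re - 3) ^ 5 + 78 * (z.re - 3) ^ 5 * (z.im ^ 2) + 288 * (z.re - 3) ^ 6 + 4 * (z.re - 3) ^ 6 * (z.im ^ 2) + 26 * (z.re - 3) ^ 7 + 1 * (z.re - 3) ^ 8 := by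
    rw [Complex.mul_re, Complex.conj_re, Complex.conj_im, hNre, hNim, Wre, Wim]
    ring
  rw [hre]
  exact Ppos2 (z.re - 3) (z.im ^ 2) (by linarith) (sq_nonneg _)

lemma Ppos3 (s u : ℝ) (hs : 0 < s) (hu : 0 ≤ u) :
    0 < 960 + 1324 * u + 399 * u ^ 2 + 36 * u ^ 3 + 1 * u ^ 4 + 3872 * s + 3116 * s * u + 526 * s * u ^ 2 + 22 * s * u ^ 3 + 6476 * s ^ 2 + 3046 * s ^ 2 * u + 276 * s ^ 2 * u ^ 2 + 4 * s ^ 2 * u ^ 3 + 5868 * s ^ 3 + 1564 * s ^ 3 * u + 66 * s ^ 3 * u ^ 2 + 3159 * s ^ 4 + 444 * s ^ 4 * u + 6 * s ^ 4 * u ^ 2 + 1038 * s ^ 5 + 66 * s ^ 5 * u + 204 * s ^ 6 + 4 * s ^ 6 * u + 22 * s ^ 7 + 1 * s ^ 8 := by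
    have t1 : (0:ℝ) ≤ 1324 * u := mul_nonneg (by norm_num) hu
    have t2 : (0:ℝ) ≤ 399 * u ^ 2 := mul_nonneg (by norm_num) (pow_nonneg hu 2)
    have t3 : (0:ℝ) ≤ 36 * u ^ 3 := mul_nonneg (by norm_num) (pow_nonneg hu 3)
    have t4 : (0:ℝ) ≤ 1 * u ^ 4 := mul_nonneg (by norm_num) (pow_nonneg hu 4)
    have t5 : (0:ℝ) ≤ 3872 * s := mul_nonneg (by norm_num) hs.le
    have t6 : (0:ℝ) ≤ 3116 * s * u := mul_nonneg (mul_nonneg (by norm_num) hs.le) hu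
    have t7 : (0:ℝ) ≤ 526 * s * u ^ 2 := mul_nonneg (mul_nonneg (by norm_num) hs.le) (pow_nonneg hu 2)
    have t8 : (0:ℝ) ≤ 22 * s * u ^ 3 := mul_nonneg (mul_nonneg (by norm_num) hs.le) (pow_nonneg hu 3)
    have t9 : (0:ℝ) ≤ 6476 * s ^ 2 := mul_nonneg (by norm_num) (pow_nonneg hs.le 2)
    have t10 : (0:ℝ) ≤ 3046 * s ^ 2 * u := mul_nonneg (mul_nonneg (by norm_num) (pow_nonneg hs.le 2)) hu
    have t11 : (0:ℝ) ≤ 276 * s ^ 2 * u ^ 2 := mul_nonneg (mul_nonneg (by norm_num) (pow_nonneg hs.le 2)) (pow_nonneg hu 2)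
    have t12 : (0:ℝ) ≤ 4 * s ^ 2 * u ^ 3 := mul_nonneg (mul_nonneg (by norm_num) (pow_nonneg hs.le 2)) (pow_nonneg hu 3)
    have t13 : (0:ℝ) ≤ 5868 * s ^ 3 := mul_nonneg (by norm_num) (pow_nonneg hs.le 3)
    have t14 : (0:ℝ) ≤ 1564 * s ^ 3 * u := mul_nonneg (mul_nonneg (by norm_num) (pow_nonneg hs.le 3)) hu
    have t15 : (0:ℝ) ≤ 66 * s ^ 3 * u ^ 2 := mul_nonneg (mul_nonneg (by norm_num) (pow_nonneg hs.le 3)) (pow_nonneg hu 2)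
    have t16 : (0:ℝ) ≤ 3159 * s ^ 4 := mul_nonneg (by norm_num) (pow_nonneg hs.le 4)
    have t17 : (0:ℝ) ≤ 444 * s ^ 4 * u := mul_nonneg (mul_nonneg (by norm_num) (pow_nonneg hs.le 4)) hu
    have t18 : (0:ℝ) ≤ 6 * s ^ 4 * u ^ 2 := mul_nonneg (mul_nonneg (by norm_num) (pow_nonneg hs.le 4)) (pow_nonneg hu 2)
    have t19 : (0:ℝ) ≤ 1038 * s ^ 5 := mul_nonneg (by norm_num) (pow_nonneg hs.le 5)
    have t20 : (0:ℝ) ≤ 66 * s ^ 5 * u := mul_nonneg (mul_nonneg (by norm_num) (pow_nonneg hs.le 5)) hu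
    have t21 : (0:ℝ) ≤ 204 * s ^ 6 := mul_nonneg (by norm_num) (pow_nonneg hs.le 6)
    have t22 : (0:ℝ) ≤ 4 * s ^ 6 * u := mul_nonneg (mul_nonneg (by norm_num) (pow_nonneg hs.le 6)) hu
    have t23 : (0:ℝ) ≤ 22 * s ^ 7 := mul_nonneg (by norm_num) (pow_nonneg hs.le 7)
    have t24 : (0:ℝ) ≤ 1 * s ^ 8 := mul_nonneg (by norm_num) (pow_nonneg hs.le 8)
    linarith [t1, t2, t3, t4, t5, t6, t7, t8, t9, t10, t11, t12, t13, t14, t15, t16, t17, t18, t19, t20, t21, t22, t23, t24]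

lemma key3 (z : ℂ) (hz : 3 < z.re) :
    0 < ((z + 1) * z * (z - 1) * (z - 2) * (starRingEnd ℂ) ((z - 2) * (z - 1) * (z + 1) * (z + 2))).re := by
  have hNre : ((z + 1) * z * (z - 1) * (z - 2) : ℂ).re = (1) * z.im ^ 2 + (1) * z.im ^ 4 + (2) * z.re + (6) * z.re * z.im ^ 2 + (-1) * z.re ^ 2 + (-6) * z.re ^ 2 * z.im ^ 2 + (-2) * z.re ^ 3 + (1) * z.re ^ 4 := by
    simp only [Complex.mul_re, Complex.mul_im, Complex.add_re, Complex.add_im, Complex.sub_re, Complex.sub_im, Complex.re_ofNat, Complex.im_ofNat, Complex.one_re, Complex.one_im]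
    ring
  have hNim : ((z + 1) * z * (z - 1) * (z - 2) : ℂ).im = (2) * z.im + (2) * z.im ^ 3 + (-2) * z.re * z.im + (-4) * z.re * z.im ^ 3 + (-6) * z.re ^ 2 * z.im + (4) * z.re ^ 3 * z.im := by
    simp only [Complex.mul_re, Complex.mul_im, Complex.add_re, Complex.add_im, Complex.sub_re, Complex.sub_im, Complex.re_ofNat, Complex.im_ofNat, Complex.one_re, Complex.one_im]
    ring
  have hre : ((z + 1) * z * (z - 1) * (z - 2) * (starRingEnd ℂ) ((z - 2) * (z - 1) * (z + 1) * (z + 2))).re = 960 + 1324 * (z.im ^ 2) + 399 * (z.im ^ 2) ^ 2 + 36 * (z.im ^ 2) ^ 3 + 1 * (z.im ^ 2) ^ 4 + 3872 * (z.re - 3) + 3116 * (z.re - 3) * (z.im ^ 2) + 526 * (z.re - 3) * (z.im ^ 2) ^ 2 + 22 * (z.re - 3) * (z.im ^ 2) ^ 3 + 6476 * (z.re - 3) ^ 2 + 3046 * (z.re - 3) ^ 2 * (z.im ^ 2) + 276 * (z.re - 3) ^ 2 * (z.im ^ 2) ^ 2 + 4 * (z.re - 3) ^ 2 * (z.im ^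 2) ^ 3 + 5868 * (z.re - 3) ^ 3 + 1564 * (z.re - 3) ^ 3 * (z.im ^ 2) + 66 * (z.re - 3) ^ 3 * (z.im ^ 2) ^ 2 + 3159 * (z.re - 3) ^ 4 + 444 * (z.re - 3) ^ 4 * (z.im ^ 2) + 6 * (z.re - 3) ^ 4 * (z.im ^ 2) ^ 2 + 1038 * (z.re - 3) ^ 5 + 66 * (z.re - 3) ^ 5 * (z.im ^ 2) + 204 * (z.re - 3) ^ 6 + 4 * (z.re - 3) ^ 6 * (z.im ^ 2) + 22 * (z.re - 3) ^ 7 + 1 * (z.re - 3) ^ 8 := by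
    rw [Complex.mul_re, Complex.conj_re, Complex.conj_im, hNre, hNim, Wre, Wim]
    ring
  rw [hre]
  exact Ppos3 (z.re - 3) (z.im ^ 2) (by linarith) (sq_nonneg _)

lemma Ppos4 (s u : ℝ) (hs : 0 < s) (hu : 0 ≤ u) :
    0 < 28 * u + 39 * u ^ 2 + 12 * u ^ 3 + 1 * u ^ 4 + 240 * s + 432 * s * u + 174 * s * u ^ 2 + 18 * s * u ^ 3 + 908 * s ^ 2 + 838 * s ^ 2 * u + 156 * s ^ 2 * u ^ 2 + 4 * s ^ 2 * u ^ 3 + 1392 * s ^ 3 + 684 * s ^ 3 * u + 54 * s ^ 3 * u ^ 2 + 1119 * s ^ 4 + 276 * s ^ 4 * u + 6 * s ^ 4 * u ^ 2 + 510 * s ^ 5 + 54 * s ^ 5 * u + 132 * s ^ 6 + 4 * s ^ 6 * u + 18 * s ^ 7 + 1 * s ^ 8 := by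
    have t0 : (0:ℝ) ≤ 28 * u := mul_nonneg (by norm_num) hu
    have t1 : (0:ℝ) ≤ 39 * u ^ 2 := mul_nonneg (by norm_num) (pow_nonneg hu 2)
    have t2 : (0:ℝ) ≤ 12 * u ^ 3 := mul_nonneg (by norm_num) (pow_nonneg hu 3)
    have t3 : (0:ℝ) ≤ 1 * u ^ 4 := mul_nonneg (by norm_num) (pow_nonneg hu 4)
    have t4 : (0:ℝ) ≤ 240 * s := mul_nonneg (by norm_num) hs.le
    have t5 : (0:ℝ) ≤ 432 * s * u := mul_nonneg (mul_nonneg (by norm_num) hs.le) hu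
    have t6 : (0:ℝ) ≤ 174 * s * u ^ 2 := mul_nonneg (mul_nonneg (by norm_num) hs.le) (pow_nonneg hu 2)
    have t7 : (0:ℝ) ≤ 18 * s * u ^ 3 := mul_nonneg (mul_nonneg (by norm_num) hs.le) (pow_nonneg hu 3)
    have t8 : (0:ℝ) ≤ 908 * s ^ 2 := mul_nonneg (by norm_num) (pow_nonneg hs.le 2)
    have t9 : (0:ℝ) ≤ 838 * s ^ 2 * u := mul_nonneg (mul_nonneg (by norm_num) (pow_nonneg hs.le 2)) hu
    have t10 : (0:ℝ) ≤ 156 * s ^ 2 * u ^ 2 := mul_nonneg (mul_nonneg (by norm_num) (pow_nonneg hs.le 2)) (pow_nonneg hu 2)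
    have t11 : (0:ℝ) ≤ 4 * s ^ 2 * u ^ 3 := mul_nonneg (mul_nonneg (by norm_num) (pow_nonneg hs.le 2)) (pow_nonneg hu 3)
    have t12 : (0:ℝ) ≤ 1392 * s ^ 3 := mul_nonneg (by norm_num) (pow_nonneg hs.le 3)
    have t13 : (0:ℝ) ≤ 684 * s ^ 3 * u := mul_nonneg (mul_nonneg (by norm_num) (pow_nonneg hs.le 3)) hu
    have t14 : (0:ℝ) ≤ 54 * s ^ 3 * u ^ 2 := mul_nonneg (mul_nonneg (by norm_num) (pow_nonneg hs.le 3)) (pow_nonneg hu 2)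
    have t15 : (0:ℝ) ≤ 1119 * s ^ 4 := mul_nonneg (by norm_num) (pow_nonneg hs.le 4)
    have t16 : (0:ℝ) ≤ 276 * s ^ 4 * u := mul_nonneg (mul_nonneg (by norm_num) (pow_nonneg hs.le 4)) hu
    have t17 : (0:ℝ) ≤ 6 * s ^ 4 * u ^ 2 := mul_nonneg (mul_nonneg (by norm_num) (pow_nonneg hs.le 4)) (pow_nonneg hu 2)
    have t18 : (0:ℝ) ≤ 510 * s ^ 5 := mul_nonneg (by norm_num) (pow_nonneg hs.le 5)
    have t19 : (0:ℝ) ≤ 54 * s ^ 5 * u := mul_nonneg (mul_nonneg (by norm_num) (pow_nonneg hs.le 5)) hu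
    have t20 : (0:ℝ) ≤ 132 * s ^ 6 := mul_nonneg (by norm_num) (pow_nonneg hs.le 6)
    have t21 : (0:ℝ) ≤ 4 * s ^ 6 * u := mul_nonneg (mul_nonneg (by norm_num) (pow_nonneg hs.le 6)) hu
    have t22 : (0:ℝ) ≤ 18 * s ^ 7 := mul_nonneg (by norm_num) (pow_nonneg hs.le 7)
    have t23 : (0:ℝ) ≤ 1 * s ^ 8 := mul_nonneg (by norm_num) (pow_nonneg hs.le 8)
    have tpos : (0:ℝ) < 240 * s := by linarith
    linarith [t0, t1, t2, t3, t4, t5, t6, t7, t8, t9, t10, t11, t12, t13, t14, t15, t16, t17, t18, t19, t20, t21, t22, t23, tpos]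

lemma key4 (z : ℂ) (hz : 3 < z.re) :
    0 < (z * (z - 1) * (z - 2) * (z - 3) * (starRingEnd ℂ) ((z - 2) * (z - 1) * (z + 1) * (z + 2))).re := by
  have hNre : (z * (z - 1) * (z - 2) * (z - 3) : ℂ).re = (-11) * z.im ^ 2 + (1) * z.im ^ 4 + (-6) * z.re + (18) * z.re * z.im ^ 2 + (11) * z.re ^ 2 + (-6) * z.re ^ 2 * z.im ^ 2 + (-6) * z.re ^ 3 + (1) * z.re ^ 4 := by
    simp only [Complex.mul_re, Complex.mul_im, Complex.add_re, Complex.add_im, Complex.sub_re, Complex.sub_im, Complex.re_ofNat, Complex.im_ofNat, Complex.one_re, Complex.one_im]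
    ring
  have hNim : (z * (z - 1) * (z - 2) * (z - 3) : ℂ).im = (-6) * z.im + (6) * z.im ^ 3 + (22) * z.re * z.im + (-4) * z.re * z.im ^ 3 + (-18) * z.re ^ 2 * z.im + (4) * z.re ^ 3 * z.im := by
    simp only [Complex.mul_re, Complex.mul_im, Complex.add_re, Complex.add_im, Complex.sub_re, Complex.sub_im, Complex.re_ofNat, Complex.im_ofNat, Complex.one_re, Complex.one_im]
    ring
  have hre : (z * (z - 1) * (z - 2) * (z - 3) * (starRingEnd ℂ) ((z - 2) * (z - 1) * (z + 1) * (z + 2))).re = 28 * (z.im ^ 2) + 39 * (z.im ^ 2) ^ 2 + 12 * (z.im ^ 2) ^ 3 + 1 * (z.im ^ 2) ^ 4 + 240 * (z.re - 3) + 432 * (z.re - 3) * (z.im ^ 2) + 174 * (z.re - 3) * (z.im ^ 2) ^ 2 + 18 * (z.re - 3) * (z.im ^ 2) ^ 3 + 908 * (z.re - 3) ^ 2 + 838 * (z.re - 3) ^ 2 * (z.im ^ 2) + 156 * (z.re - 3) ^ 2 * (z.im ^ 2) ^ 2 + 4 * (z.re - 3) ^ 2 * (z.im ^ 2) ^ 3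 + 1392 * (z.re - 3) ^ 3 + 684 * (z.re - 3) ^ 3 * (z.im ^ 2) + 54 * (z.re - 3) ^ 3 * (z.im ^ 2) ^ 2 + 1119 * (z.re - 3) ^ 4 + 276 * (z.re - 3) ^ 4 * (z.im ^ 2) + 6 * (z.re - 3) ^ 4 * (z.im ^ 2) ^ 2 + 510 * (z.re - 3) ^ 5 + 54 * (z.re - 3) ^ 5 * (z.im ^ 2) + 132 * (z.re - 3) ^ 6 + 4 * (z.re - 3) ^ 6 * (z.im ^ 2) + 18 * (z.re - 3) ^ 7 + 1 * (z.re - 3) ^ 8 := by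
    rw [Complex.mul_re, Complex.conj_re, Complex.conj_im, hNre, hNim, Wre, Wim]
    ring
  rw [hre]
  exact Ppos4 (z.re - 3) (z.im ^ 2) (by linarith) (sq_nonneg _)
lemma binomC0 (z : ℂ) : binomC 4 0 z = (z + 4) * (z + 3) * (z + 2) * (z + 1) / 24 := by
  simp [binomC, Finset.prod_range_succ, Nat.factorial]; try ring

lemma binomC1 (z : ℂ) : binomC 4 1 z = (z + 3) * (z + 2) * (z + 1) * z / 24 := by
  simp [binomC, Finset.prod_range_succ, Nat.factorial]; try ring

lemma binomC2 (z : ℂ) : binomC 4 2 z = (z + 2) * (z + 1) * z * (z - 1) / 24 := by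
  simp [binomC, Finset.prod_range_succ, Nat.factorial]; try ring

lemma binomC3 (z : ℂ) : binomC 4 3 z = (z + 1) * z * (z - 1) * (z - 2) / 24 := by
  simp [binomC, Finset.prod_range_succ, Nat.factorial]; try ring

lemma binomC4 (z : ℂ) : binomC 4 4 z = z * (z - 1) * (z - 2) * (z - 3) / 24 := by
  simp [binomC, Finset.prod_range_succ, Nat.factorial]; try ring

lemma upper (h : Fin 5 → ℝ) (hnn : ∀ j, 0 ≤ h j) (hne : h ≠ 0) (z : ℂ)
    (hroot : ∑ j : Fin 5, (h j : ℂ) * binomC 4 (j : ℕ) z = 0) : z.re ≤ 3 := by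
  by_contra hc
  push_neg at hc
  rw [Fin.sum_univ_five] at hroot
  simp only [show ((0 : Fin 5) : ℕ) = 0 from rfl, show ((1 : Fin 5) : ℕ) = 1 from rfl,
    show ((2 : Fin 5) : ℕ) = 2 from rfl, show ((3 : Fin 5) : ℕ) = 3 from rfl,
    show ((4 : Fin 5) : ℕ) = 4 from rfl, binomC0, binomC1, binomC2, binomC3, binomC4] at hroot
  set W : ℂ := (starRingEnd ℂ) ((z - 2) * (z - 1) * (z + 1) * (z + 2)) with hW
  have key : (h 0 : ℂ) * ((z + 4) * (z + 3) * (z + 2) * (z + 1) * W)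
      + (h 1 : ℂ) * ((z + 3) * (z + 2) * (z + 1) * z * W)
      + (h 2 : ℂ) * ((z + 2) * (z + 1) * z * (z - 1) * W)
      + (h 3 : ℂ) * ((z + 1) * z * (z - 1) * (z - 2) * W)
      + (h 4 : ℂ) * (z * (z - 1) * (z - 2) * (z - 3) * W) = 0 := by
    linear_combination (24 * W) * hroot
  have hre : h 0 * ((z + 4) * (z + 3) * (z + 2) * (z + 1) * W).re
      + h 1 * ((z + 3) * (z + 2) * (z + 1) * z * W).re
      + h 2 * ((z + 2) * (z + 1) * z * (z - 1) * W).re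
      + h 3 * ((z + 1) * z * (z - 1) * (z - 2) * W).re
      + h 4 * (z * (z - 1) * (z - 2) * (z - 3) * W).re = 0 := by
    have := congrArg Complex.re key
    simpa only [Complex.add_re, Complex.re_ofReal_mul, Complex.zero_re] using this
  have p0 := key0 z hc
  have p1 := key1 z hc
  have p2 := key2 z hc
  have p3 := key3 z hc
  have p4 := key4 z hc
  rw [← hW] at p0 p1 p2 p3 p4
  have n0 := mul_nonneg (hnn 0) p0.le
  have n1 := mul_nonneg (hnn 1) p1.le
  have n2 := mul_nonneg (hnn 2) p2.le
  have n3 := mul_nonneg (hnn 3) p3.le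
  have n4 := mul_nonneg (hnn 4) p4.le
  have e0 : h 0 = 0 := by
    have : h 0 * ((z + 4) * (z + 3) * (z + 2) * (z + 1) * W).re = 0 := by linarith
    exact (mul_eq_zero.mp this).resolve_right (ne_of_gt p0)
  have e1 : h 1 = 0 := by
    have : h 1 * ((z + 3) * (z + 2) * (z + 1) * z * W).re = 0 := by linarith
    exact (mul_eq_zero.mp this).resolve_right (ne_of_gt p1)
  have e2 : h 2 = 0 := by
    have : h 2 * ((z + 2) * (z + 1) * z * (z - 1) * W).re = 0 := by linarith
    exact (mul_eq_zero.mp this).resolve_right (ne_of_gt p2)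
  have e3 : h 3 = 0 := by
    have : h 3 * ((z + 1) * z * (z - 1) * (z - 2) * W).re = 0 := by linarith
    exact (mul_eq_zero.mp this).resolve_right (ne_of_gt p3)
  have e4 : h 4 = 0 := by
    have : h 4 * (z * (z - 1) * (z - 2) * (z - 3) * W).re = 0 := by linarith
    exact (mul_eq_zero.mp this).resolve_right (ne_of_gt p4)
  exact hne (funext fun j => by fin_cases j <;> assumption)

/-- Every root `z` of a degree `4` SNN polynomial satisfies `-4 ≤ Re z ≤ 3`. -/
theorem stmt_8 (h : Fin 5 → ℝ)
    (hnonneg : ∀ j, 0 ≤ h j) (hne : h ≠ 0) (z : ℂ)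
    (hroot : ∑ j : Fin 5, (h j : ℂ) * binomC 4 (j : ℕ) z = 0) :
    -4 ≤ z.re ∧ z.re ≤ 3 := by
  refine ⟨?_, upper h hnonneg hne z hroot⟩
  set h' : Fin 5 → ℝ := ![h 4, h 3, h 2, h 1, h 0] with hh'
  have hnn' : ∀ j, 0 ≤ h' j := by
    intro j; fin_cases j <;> simp [h'] <;> apply hnonneg
  have hne' : h' ≠ 0 := by
    intro H; apply hne; funext j; fin_cases j
    · simpa [h'] using congrFun H 4
    · simpa [h'] using congrFun H 3
    · simpa [h'] using congrFun H 2
    · simpa [h'] using congrFun H 1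
    · simpa [h'] using congrFun H 0
  have hroot' : ∑ j : Fin 5, (h' j : ℂ) * binomC 4 (j : ℕ) (-1 - z) = 0 := by
    rw [Fin.sum_univ_five] at hroot ⊢
    simp only [show ((0 : Fin 5) : ℕ) = 0 from rfl, show ((1 : Fin 5) : ℕ) = 1 from rfl,
      show ((2 : Fin 5) : ℕ) = 2 from rfl, show ((3 : Fin 5) : ℕ) = 3 from rfl,
      show ((4 : Fin 5) : ℕ) = 4 from rfl, binomC0, binomC1, binomC2, binomC3, binomC4,
      hh'] at hroot ⊢
    simp only [Matrix.cons_val_zero, Matrix.cons_val_one, Matrix.head_cons,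
      Matrix.cons_val_two, Matrix.tail_cons, Matrix.cons_val_three, Matrix.cons_val_four]
    linear_combination hroot
  have hub := upper h' hnn' hne' (-1 - z) hroot'
  have : (-1 - z).re = -1 - z.re := by simp
  linarith [hub, this.le, this.ge]
end

section
/- The roots of any degree 2 SNN polynomial are contained in [-3, 2] \cup {x + iy \in \mathbb{C} : y^2 \le -x^2 - x + 1/2}. -/
/-- The roots of any degree `2` SNN polynomial are contained in
`[-3,2] ∪ {x + iy : y² ≤ -x² - x + 1/2}`. -/
theorem stmt_9 (h : Fin 3 → ℝ)
    (hnonneg : ∀ j, 0 ≤ h j) (hne : h ≠ 0) (z : ℂ)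
    (hroot : ∑ j : Fin 3, (h j : ℂ) * binomC 2 (j : ℕ) z = 0) :
    (z.im = 0 ∧ -3 ≤ z.re ∧ z.re ≤ 2) ∨ z.im ^ 2 ≤ -z.re ^ 2 - z.re + 1 / 2 := by
  obtain ⟨x, y⟩ := z
  have ha := hnonneg 0
  have hb := hnonneg 1
  have hc := hnonneg 2
  have hpos : 0 < h 0 + h 1 + h 2 := by
    obtain ⟨j, hj⟩ := Function.ne_iff.mp hne
    have := (hnonneg j).lt_of_ne (Ne.symm hj)
    fin_cases j
    · linarith [show (0:ℝ) < h 0 from this]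
    · linarith [show (0:ℝ) < h 1 from this]
    · linarith [show (0:ℝ) < h 2 from this]
  norm_num [binomC, Fin.sum_univ_three, Finset.prod_range_succ, Nat.factorial,
    Complex.ext_iff, Complex.add_re, Complex.add_im, Complex.mul_re, Complex.mul_im,
    Complex.div_re, Complex.div_im, Complex.normSq] at hroot
  obtain ⟨Ere, Eim⟩ := hroot
  by_cases hy0 : y = 0
  · left
    subst hy0
    ring_nf at Ere
    refine ⟨rfl, ?_, ?_⟩
    · by_contra hcon
      push_neg at hcon
      nlinarith [mul_nonneg ha (mul_nonneg (by linarith : (0:ℝ) ≤ -x) (by linarith : (0:ℝ) ≤ -(x+3))),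
        mul_nonneg hb (mul_nonneg (by linarith : (0:ℝ) ≤ -(x+3)) (by linarith : (0:ℝ) ≤ -(x-2))),
        mul_nonneg hc (mul_nonneg (by linarith : (0:ℝ) ≤ -(x+3)) (by linarith : (0:ℝ) ≤ -(x-4)))]
    · by_contra hcon
      push_neg at hcon
      nlinarith [mul_nonneg ha (mul_nonneg (by linarith : (0:ℝ) ≤ x-2) (by linarith : (0:ℝ) ≤ x+5)),
        mul_nonneg hb (mul_nonneg (by linarith : (0:ℝ) ≤ x-2) (by linarith : (0:ℝ) ≤ x+3)),
        mul_nonneg hc (mul_nonneg (by linarith : (0:ℝ) ≤ x-2) (by linarith : (0:ℝ) ≤ x+1))]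
  · right
    ring_nf at Ere Eim
    have h2 : 2 * (h 0 + h 1 + h 2) * x + (3 * h 0 + h 1 - h 2) = 0 := by
      rcases mul_eq_zero.mp (show y * (2 * (h 0 + h 1 + h 2) * x + (3 * h 0 + h 1 - h 2)) = 0 by
        linear_combination 2 * Eim) with hh | hh
      · exact absurd hh hy0
      · exact hh
    have hxx : (2 * (h 0 + h 1 + h 2) * x + (3 * h 0 + h 1 - h 2)) * x = 0 := by
      rw [h2]; ring
    nlinarith [Ere, h2, hxx, hb, hpos, mul_pos hpos hpos, sq_nonneg y, sq_nonneg x]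
end

section
/- The polynomial f(t) = \binom{t+5}{5} + 33\binom{t}{5} has a complex root z with Re(z) > 4. -/
open Polynomial Complex

/-- The polynomial `120·f(t)` as a `Polynomial ℂ`. -/
noncomputable def Pquint : Polynomial ℂ :=
  C 34 * X ^ 5 - C 315 * X ^ 4 + C 1240 * X ^ 3 - C 1425 * X ^ 2 + C 1066 * X + C 120

lemma Pquint_natDegree : Pquint.natDegree = 5 := by
  unfold Pquint; compute_degree!

lemma Pquint_leadingCoeff : Pquint.leadingCoeff = 34 := by
  rw [Polynomial.leadingCoeff, Pquint_natDegree]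
  unfold Pquint
  simp [coeff_add, coeff_sub, coeff_C_mul, coeff_X_pow, coeff_C]

lemma Pquint_ne_zero : Pquint ≠ 0 := by
  intro h
  have := Pquint_leadingCoeff
  rw [h, leadingCoeff_zero] at this
  norm_num at this

lemma binomC_eq (z : ℂ) :
    binomC 5 0 z + 33 * binomC 5 5 z = Pquint.eval z / 120 := by
  unfold binomC Pquint
  have h5 : ((5 : ℕ).factorial : ℂ) = 120 := by norm_num [Nat.factorial]
  rw [h5]
  simp only [Finset.prod_range_succ, Finset.prod_range_zero]
  push_cast
  simp only [eval_add, eval_sub, eval_mul, eval_pow, eval_C, eval_X]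
  ring

lemma prod_nnnorm (s : Multiset ℂ) : ‖s.prod‖₊ = (s.map (‖·‖₊)).prod := by
  induction s using Multiset.induction with
  | empty => simp
  | cons a s ih => simp [ih, nnnorm_mul]

/-- The reflection inequality: if `r.re ≤ 4 < w.re`, then the reflection of `w`
across the line `Re = 4` is at least as close to `r` as `w` is. -/
lemma reflect_dist_le {w r : ℂ} (hw : 4 < w.re) (hr : r.re ≤ 4) :
    ‖(8 - (starRingEnd ℂ) w) - r‖₊ ≤ ‖w - r‖₊ := by
  rw [← NNReal.coe_le_coe]
  have h1 : Complex.normSq ((8 - (starRingEnd ℂ) w) - r) ≤ Complex.normSq (w - r) := by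
    simp only [Complex.normSq_apply, Complex.sub_re, Complex.sub_im, Complex.conj_re,
      Complex.conj_im, Complex.re_ofNat, Complex.im_ofNat]
    nlinarith [sq_nonneg (w.im - r.im)]
  have h2 : ‖(8 - (starRingEnd ℂ) w) - r‖ ≤ ‖w - r‖ := by
    rw [Complex.norm_def, Complex.norm_def]
    exact Real.sqrt_le_sqrt h1
  exact h2

/-- The polynomial `f(t) = C(t+5,5) + 33·C(t,5)` has a complex root `z` with `Re z > 4`. -/
theorem stmt_10 :
    ∃ z : ℂ, binomC 5 0 z + 33 * binomC 5 5 z = 0 ∧ 4 < z.re := by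
  by_contra hcon
  push_neg at hcon
  -- every root of Pquint has real part ≤ 4
  have hroots : ∀ r ∈ Pquint.roots, r.re ≤ 4 := by
    intro r hr
    have hr0 : Pquint.eval r = 0 := by
      exact (Polynomial.mem_roots Pquint_ne_zero).mp hr
    have : binomC 5 0 r + 33 * binomC 5 5 r = 0 := by
      rw [binomC_eq, hr0]; simp
    exact hcon r this
  -- factor Pquint over ℂ
  have hcard : Multiset.card Pquint.roots = Pquint.natDegree :=
    (Polynomial.splits_iff_card_roots.mp (IsAlgClosed.splits Pquint))
  have hfact := Polynomial.C_leadingCoeff_mul_prod_multiset_X_sub_C hcard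
  rw [Pquint_leadingCoeff] at hfact
  -- evaluate at w and its reflection
  set w : ℂ := (((20001 : ℝ) / 5000 : ℝ) : ℂ) + (((1881 : ℝ) / 625 : ℝ) : ℂ) * I with hw_def
  have hwre : 4 < w.re := by
    simp [hw_def]
    norm_num
  set w' : ℂ := 8 - (starRingEnd ℂ) w with hw'_def
  have key : ‖Pquint.eval w'‖₊ ≤ ‖Pquint.eval w‖₊ := by
    have hev : ∀ u : ℂ, Pquint.eval u = 34 * (Pquint.roots.map fun r => u - r).prod := by
      intro u
      conv_lhs => rw [← hfact]
      rw [eval_mul, eval_C, Polynomial.eval_multiset_prod]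
      congr 1
      rw [Multiset.map_map]
      exact congrArg Multiset.prod
        (Multiset.map_congr rfl fun r _ => by simp [Function.comp_apply])
    rw [hev w, hev w', nnnorm_mul, nnnorm_mul]
    refine mul_le_mul_right ?_ _
    rw [prod_nnnorm, prod_nnnorm, Multiset.map_map, Multiset.map_map]
    apply Multiset.prod_map_le_prod_map
    intro r hr
    exact reflect_dist_le hwre (hroots r hr)
  -- numeric contradiction
  have hnum : ‖Pquint.eval w‖₊ < ‖Pquint.eval w'‖₊ := by
    rw [← NNReal.coe_lt_coe]
    show ‖Pquint.eval w‖ < ‖Pquint.eval w'‖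
    rw [Complex.norm_def, Complex.norm_def]
    apply Real.sqrt_lt_sqrt (Complex.normSq_nonneg _)
    have hw' : w' = (((19999 : ℝ) / 5000 : ℝ) : ℂ) + (((1881 : ℝ) / 625 : ℝ) : ℂ) * I := by
      rw [hw'_def, hw_def]
      simp only [Complex.ext_iff, Complex.sub_re, Complex.sub_im, Complex.add_re, Complex.add_im,
        Complex.conj_re, Complex.conj_im, Complex.mul_re, Complex.mul_im, Complex.I_re,
        Complex.I_im, Complex.ofReal_re, Complex.ofReal_im, Complex.re_ofNat, Complex.im_ofNat]
      norm_num
    rw [hw', hw_def]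
    unfold Pquint
    simp only [eval_add, eval_sub, eval_mul, eval_pow, eval_C, eval_X]
    simp only [pow_succ, pow_zero, one_mul, Complex.normSq_apply, Complex.mul_re, Complex.mul_im,
      Complex.add_re, Complex.add_im, Complex.sub_re, Complex.sub_im, Complex.I_re, Complex.I_im,
      Complex.ofReal_re, Complex.ofReal_im, Complex.re_ofNat, Complex.im_ofNat]
    norm_num
  exact absurd key (not_le.mpr hnum)
end

section
/- Every complex root z of the polynomial M_d(t) = \binom{t+d}{d} + \binom{t}{d} has real part equal to -1/2. -/
lemma prod_ne_aux {s : Finset ℕ} (hs : s.Nonempty) (f g : ℕ → ℝ)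
    (h0 : ∀ i ∈ s, 0 ≤ f i) (hlt : ∀ i ∈ s, f i < g i)
    (heq : ∏ i ∈ s, f i = ∏ i ∈ s, g i) : False := by
  have hg : ∀ i ∈ s, 0 < g i := fun i hi => lt_of_le_of_lt (h0 i hi) (hlt i hi)
  have hpg : 0 < ∏ i ∈ s, g i := Finset.prod_pos hg
  have hpf : 0 < ∏ i ∈ s, f i := heq ▸ hpg
  have hf : ∀ i ∈ s, 0 < f i := by
    intro i hi
    rcases (h0 i hi).lt_or_eq with h | h
    · exact h
    · exact absurd (Finset.prod_eq_zero hi h.symm) (by positivity)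
  exact absurd heq (ne_of_lt (Finset.prod_lt_prod_of_nonempty hf hlt hs))

/-- Every complex root of `M_d(t) = C(t+d,d) + C(t,d)` has real part `-1/2`. -/
theorem stmt_11 (d : ℕ) (hd : 1 ≤ d) (z : ℂ)
    (hroot : binomC d 0 z + binomC d d z = 0) :
    z.re = -(1 / 2) := by
  have hF : (d.factorial : ℂ) ≠ 0 := Nat.cast_ne_zero.mpr d.factorial_ne_zero
  unfold binomC at hroot
  rw [← add_div, div_eq_zero_iff] at hroot
  have h1 : (∏ k ∈ Finset.range d, (z + d - k)) + ∏ k ∈ Finset.range d, (z - k) = 0 := by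
    rcases hroot with h | h
    · rw [← h]
      congr 1
      · exact Finset.prod_congr rfl (fun k _ => by push_cast; ring)
      · exact Finset.prod_congr rfl (fun k _ => by ring)
    · exact absurd h hF
  have h2 : (∏ k ∈ Finset.range d, (z + d - k)) = - ∏ k ∈ Finset.range d, (z - k) := by
    linear_combination h1
  -- take normSq of both sides
  have h3 : (∏ k ∈ Finset.range d, Complex.normSq (z + d - k))
      = ∏ k ∈ Finset.range d, Complex.normSq (z - k) := by
    have := congrArg Complex.normSq h2
    rw [Complex.normSq_neg] at this
    simpa [map_prod] using this
  -- reindex the right product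
  have h4 : (∏ k ∈ Finset.range d, Complex.normSq (z - k))
      = ∏ k ∈ Finset.range d, Complex.normSq (z - (d - 1 - k : ℕ)) := by
    exact (Finset.prod_range_reflect (fun k => Complex.normSq (z - k)) d).symm
  rw [h4] at h3
  -- key termwise identity
  have key : ∀ k ∈ Finset.range d,
      Complex.normSq (z + d - k) - Complex.normSq (z - (d - 1 - k : ℕ))
      = (2 * z.re + 1) * (2 * ((d : ℝ) - k) - 1) := by
    intro k hk
    have hk' : k < d := Finset.mem_range.mp hk
    have hc : ((d - 1 - k : ℕ) : ℝ) = (d : ℝ) - 1 - k := by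
      have : k ≤ d - 1 := by omega
      push_cast [Nat.cast_sub this, Nat.cast_sub hd]
      ring
    simp only [Complex.normSq_apply, Complex.sub_re, Complex.sub_im, Complex.add_re,
      Complex.add_im, Complex.natCast_re, Complex.natCast_im, hc]
    ring
  have hne : (2 * z.re + 1) ≠ 0 → False := by
    intro h
    rcases h.lt_or_gt with hlt | hgt
    · -- 2x+1 < 0 : normSq (z+d-k) < normSq (z - (d-1-k))
      refine prod_ne_aux ⟨0, Finset.mem_range.mpr (by omega)⟩
        (fun k => Complex.normSq (z + d - k)) (fun k => Complex.normSq (z - (d - 1 - k : ℕ)))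
        (fun k _ => Complex.normSq_nonneg _) (fun k hk => ?_) h3
      have hk' : k < d := Finset.mem_range.mp hk
      have := key k hk
      nlinarith [this, (show (1:ℝ) ≤ (d:ℝ) - k by
        have : (k:ℝ) + 1 ≤ d := by exact_mod_cast hk'
        linarith)]
    · refine prod_ne_aux ⟨0, Finset.mem_range.mpr (by omega)⟩
        (fun k => Complex.normSq (z - (d - 1 - k : ℕ))) (fun k => Complex.normSq (z + d - k))
        (fun k _ => Complex.normSq_nonneg _) (fun k hk => ?_) h3.symm
      have hk' : k < d := Finset.mem_range.mp hk
      have := key k hk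
      nlinarith [this, (show (1:ℝ) ≤ (d:ℝ) - k by
        have : (k:ℝ) + 1 ≤ d := by exact_mod_cast hk'
        linarith)]
  by_contra hre
  exact hne (fun h => hre (by linarith))
end

section
/- If z = -1/2 + bi with b > 0, then z is a root of M_d(t) = \binom{t+d}{d} + \binom{t}{d} if and only if \sum_{j=0}^{d-1} cot^{-1}(b / (j + 1/2)) is an odd multiple of \pi/2. -/
open Complex in
lemma polar_re_im (s t : ℝ) : (s : ℂ) * Complex.exp ((t : ℂ) * Complex.I) =
    (⟨s * Real.cos t, s * Real.sin t⟩ : ℂ) := by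
  rw [Complex.exp_mul_I]
  apply Complex.ext <;>
    simp [Complex.mul_re, Complex.mul_im, Complex.cos_ofReal_re, Complex.sin_ofReal_re,
      Complex.cos_ofReal_im, Complex.sin_ofReal_im] <;> ring

open Complex Finset Real in
lemma exp_two_mul_eq_neg_one_iff (S : ℝ) :
    Complex.exp (((2 * S : ℝ) : ℂ) * Complex.I) = -1 ↔
      ∃ k : ℤ, Odd k ∧ S = (k : ℝ) * (π / 2) := by
  constructor
  · intro h
    have h1 : Complex.exp (((2 * S + π : ℝ) : ℂ) * Complex.I) = 1 := by
      push_cast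
      rw [add_mul, Complex.exp_add]
      push_cast at h
      rw [h, Complex.exp_pi_mul_I]
      ring
    obtain ⟨n, hn⟩ := Complex.exp_eq_one_iff.mp h1
    have hn' : ((2 * S + π : ℝ) : ℂ) * Complex.I = (((n : ℝ) * (2 * π) : ℝ) : ℂ) * Complex.I := by
      rw [hn]; push_cast; ring
    have hre : (2 * S + π : ℝ) = (n : ℝ) * (2 * π) := by
      have := mul_right_cancel₀ Complex.I_ne_zero hn'
      exact_mod_cast this
    refine ⟨2 * n - 1, ⟨n - 1, by ring⟩, ?_⟩
    push_cast
    linarith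
  · rintro ⟨k, ⟨m, hm⟩, hS⟩
    subst hm
    have h2S : ((2 * S : ℝ) : ℂ) * Complex.I =
        (m : ℂ) * (2 * (π : ℂ) * Complex.I) + (π : ℂ) * Complex.I := by
      push_cast [hS]
      ring
    rw [h2S, Complex.exp_add, Complex.exp_pi_mul_I,
      Complex.exp_eq_one_iff.mpr ⟨m, rfl⟩]
    ring

open Complex Finset Real in
/-- For `z = -1/2 + b·i` with `b > 0`, `z` is a root of `M_d(t) = C(t+d,d) + C(t,d)` iff
`∑_{j=0}^{d-1} cot⁻¹(b/(j+1/2))` is an odd multiple of `π/2`, where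
`cot⁻¹(b/(j+1/2)) = arctan((j+1/2)/b)`. -/
theorem stmt_13 (d : ℕ) (hd : 1 ≤ d) (b : ℝ) (hb : 0 < b) :
    (binomC d 0 (⟨-(1 / 2), b⟩ : ℂ) + binomC d d (⟨-(1 / 2), b⟩ : ℂ) = 0) ↔
      ∃ k : ℤ, Odd k ∧
        ∑ j ∈ Finset.range d, Real.arctan (((j : ℝ) + 1 / 2) / b) = (k : ℝ) * (Real.pi / 2) := by
  set z : ℂ := ⟨-(1 / 2), b⟩ with hz
  set a : ℕ → ℝ := fun j => Real.arctan (((j : ℝ) + 1 / 2) / b) with ha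
  set f : ℕ → ℂ := fun j => (⟨(j : ℝ) + 1 / 2, b⟩ : ℂ) with hfdef
  set S : ℝ := ∑ j ∈ Finset.range d, a j with hSdef
  set θ : ℝ := ∑ j ∈ Finset.range d, (π / 2 - a j) with hθdef
  set r : ℕ → ℝ := fun j => b / Real.cos (a j) with hrdef
  have hcos : ∀ j : ℕ, 0 < Real.cos (a j) := fun j =>
    Real.cos_pos_of_mem_Ioo ⟨Real.neg_pi_div_two_lt_arctan _, Real.arctan_lt_pi_div_two _⟩
  have hrpos : ∀ j : ℕ, 0 < r j := fun j => div_pos hb (hcos j)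
  have htan : ∀ j : ℕ, Real.sin (a j) / Real.cos (a j) = ((j : ℝ) + 1 / 2) / b := by
    intro j
    rw [← Real.tan_eq_sin_div_cos, ha]
    exact Real.tan_arctan _
  -- polar form of each factor
  have hpolar : ∀ j : ℕ, f j = (r j : ℂ) * Complex.exp (((π / 2 - a j : ℝ) : ℂ) * Complex.I) := by
    intro j
    rw [polar_re_im]
    apply Complex.ext
    · show (j : ℝ) + 1 / 2 = r j * Real.cos (π / 2 - a j)
      rw [Real.cos_pi_div_two_sub]
      have hrs : r j * Real.sin (a j) = b * (Real.sin (a j) / Real.cos (a j)) := by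
        simp only [hrdef]; ring
      rw [hrs, htan j]
      field_simp
    · show b = r j * Real.sin (π / 2 - a j)
      rw [Real.sin_pi_div_two_sub]
      simp only [hrdef]
      rw [div_mul_cancel₀ _ (hcos j).ne']
  -- product in polar form
  set R : ℝ := ∏ j ∈ Finset.range d, r j with hRdef
  have hRpos : 0 < R := Finset.prod_pos fun j _ => hrpos j
  have hQ : ∏ j ∈ Finset.range d, f j = (R : ℂ) * Complex.exp ((θ : ℂ) * Complex.I) := by
    calc ∏ j ∈ Finset.range d, f j
        = ∏ j ∈ Finset.range d, ((r j : ℂ) * Complex.exp (((π / 2 - a j : ℝ) : ℂ) * Complex.I)) :=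
          Finset.prod_congr rfl fun j _ => hpolar j
      _ = (∏ j ∈ Finset.range d, (r j : ℂ)) *
            ∏ j ∈ Finset.range d, Complex.exp (((π / 2 - a j : ℝ) : ℂ) * Complex.I) :=
          Finset.prod_mul_distrib
      _ = (R : ℂ) * Complex.exp ((θ : ℂ) * Complex.I) := by
          rw [← Complex.exp_sum]
          congr 1
          · rw [hRdef, Complex.ofReal_prod]
          · rw [hθdef, Complex.ofReal_sum, Finset.sum_mul]
  set Q : ℂ := ∏ j ∈ Finset.range d, f j with hQdef
  have hconjQ : (starRingEnd ℂ) Q = (R : ℂ) * Complex.exp (((-θ : ℝ) : ℂ) * Complex.I) := by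
    rw [hQ, map_mul, Complex.conj_ofReal, ← Complex.exp_conj]
    congr 1
    simp [Complex.conj_I]
  -- rewrite binomC
  have hfac : (d.factorial : ℂ) ≠ 0 := Nat.cast_ne_zero.mpr d.factorial_ne_zero
  have h0 : binomC d 0 z = Q / (d.factorial : ℂ) := by
    unfold binomC
    congr 1
    rw [hQdef, ← Finset.prod_range_reflect f d]
    apply Finset.prod_congr rfl
    intro k hk
    rw [Finset.mem_range] at hk
    have hcast : ((d - 1 - k : ℕ) : ℝ) = (d : ℝ) - 1 - k := by
      rw [Nat.sub_sub, Nat.cast_sub (by omega : 1 + k ≤ d)]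
      push_cast; ring
    apply Complex.ext <;> simp [hz, hfdef, hcast] <;> ring
  have h1 : binomC d d z = ((-1 : ℂ) ^ d * (starRingEnd ℂ) Q) / (d.factorial : ℂ) := by
    unfold binomC
    congr 1
    have hfactor : ∀ k ∈ Finset.range d,
        z + (d : ℂ) - (d : ℂ) - (k : ℂ) = (-1 : ℂ) * (starRingEnd ℂ) (f k) := by
      intro k _
      apply Complex.ext <;> simp [hz, hfdef] <;> ring
    rw [Finset.prod_congr rfl hfactor, Finset.prod_mul_distrib, Finset.prod_const,
      Finset.card_range, hQdef, ← map_prod]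
  rw [h0, h1, ← add_div, div_eq_zero_iff, or_iff_left hfac, hconjQ, hQ]
  -- reduce to exponential equation
  have hRne : (R : ℂ) ≠ 0 := Complex.ofReal_ne_zero.mpr hRpos.ne'
  have hfactored : (R : ℂ) * Complex.exp ((θ : ℂ) * Complex.I) +
      (-1 : ℂ) ^ d * ((R : ℂ) * Complex.exp (((-θ : ℝ) : ℂ) * Complex.I)) =
      (R : ℂ) * (Complex.exp ((θ : ℂ) * Complex.I) +
        (-1 : ℂ) ^ d * Complex.exp (((-θ : ℝ) : ℂ) * Complex.I)) := by ring
  rw [hfactored, mul_eq_zero, or_iff_right hRne]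
  -- multiply through by exp(θ I)
  have hexpne : ∀ w : ℂ, Complex.exp w ≠ 0 := Complex.exp_ne_zero
  have hsplit : Complex.exp ((θ : ℂ) * Complex.I) +
      (-1 : ℂ) ^ d * Complex.exp (((-θ : ℝ) : ℂ) * Complex.I) =
      Complex.exp (((-θ : ℝ) : ℂ) * Complex.I) *
        (Complex.exp (((2 * θ : ℝ) : ℂ) * Complex.I) + (-1 : ℂ) ^ d) := by
    rw [mul_add, ← Complex.exp_add]
    have harg : ((-θ : ℝ) : ℂ) * Complex.I + ((2 * θ : ℝ) : ℂ) * Complex.I =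
        (θ : ℂ) * Complex.I := by push_cast; ring
    rw [harg]
    ring
  rw [hsplit, mul_eq_zero, or_iff_right (hexpne _)]
  -- relate θ and S
  have hθS : θ = d * (π / 2) - S := by
    rw [hθdef, Finset.sum_sub_distrib, Finset.sum_const, Finset.card_range, hSdef,
      nsmul_eq_mul]
  set u : ℂ := Complex.exp (((2 * θ : ℝ) : ℂ) * Complex.I) with hu
  set v : ℂ := Complex.exp (((2 * S : ℝ) : ℂ) * Complex.I) with hv
  have huv : u * v = (-1 : ℂ) ^ d := by
    rw [hu, hv, ← Complex.exp_add]
    have harg : ((2 * θ : ℝ) : ℂ) * Complex.I + ((2 * S : ℝ) : ℂ) * Complex.I =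
        (d : ℕ) * ((π : ℂ) * Complex.I) := by
      push_cast [hθS]
      ring
    rw [harg, Complex.exp_nat_mul, Complex.exp_pi_mul_I]
  have hvne : v ≠ 0 := hexpne _
  have hueq : u = (-1 : ℂ) ^ d * v⁻¹ := by
    field_simp
    linear_combination huv
  have hne1 : ((-1 : ℂ) ^ d) ≠ 0 := by simp
  have hfinal : u + (-1 : ℂ) ^ d = 0 ↔ v = -1 := by
    rw [hueq]
    constructor
    · intro h
      have h2 : ((-1 : ℂ) ^ d) * (v⁻¹ + 1) = 0 := by linear_combination h
      rcases mul_eq_zero.mp h2 with h3 | h3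
      · exact absurd h3 hne1
      · have h4 : v⁻¹ = -1 := by linear_combination h3
        rw [inv_eq_iff_eq_inv] at h4
        rw [h4]; norm_num
    · intro h
      rw [h]
      norm_num
  rw [hfinal, hv]
  exact exp_two_mul_eq_neg_one_iff S
end

section
/- If b_d denotes the unique positive real with \sum_{j=0}^{d-1} cot^{-1}(b_d/(j+1/2)) = \pi/2, then b_d = d^2/\pi + O(1) as d \to \infty; equivalently, the root \beta_d of M_d(t) of maximal norm satisfies |\beta_d + 1/2| = d^2/\pi + O(1). -/
open Filter Asymptotics

lemma my_arctan_le_self {x : ℝ} (hx : 0 ≤ x) : Real.arctan x ≤ x := by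
  have h : ∀ y : ℝ, HasDerivAt (fun x => x - Real.arctan x) (1 - 1 / (1 + y ^ 2)) y :=
    fun y => (hasDerivAt_id y).sub (Real.hasDerivAt_arctan y)
  have hm : Monotone (fun x => x - Real.arctan x) := by
    apply monotone_of_deriv_nonneg (fun y => (h y).differentiableAt)
    intro y
    rw [(h y).deriv]
    have h1 : (0:ℝ) < 1 + y ^ 2 := by positivity
    rw [sub_nonneg, div_le_one h1]
    nlinarith
  have := hm hx
  simp only [Real.arctan_zero, sub_zero] at this
  linarith

lemma my_cubic_le_arctan {x : ℝ} (hx : 0 ≤ x) : x - x ^ 3 / 3 ≤ Real.arctan x := by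
  have h : ∀ y : ℝ, HasDerivAt (fun x => Real.arctan x - (x - x ^ 3 / 3))
      (1 / (1 + y ^ 2) - (1 - 3 * y ^ 2 / 3)) y := by
    intro y
    exact (Real.hasDerivAt_arctan y).sub
      ((hasDerivAt_id y).sub (by simpa using (hasDerivAt_pow 3 y).div_const 3))
  have hm : Monotone (fun x => Real.arctan x - (x - x ^ 3 / 3)) := by
    apply monotone_of_deriv_nonneg (fun y => (h y).differentiableAt)
    intro y
    rw [(h y).deriv]
    have h1 : (0:ℝ) < 1 + y ^ 2 := by positivity
    have h2 : 1 / (1 + y ^ 2) - (1 - 3 * y ^ 2 / 3) = y ^ 4 / (1 + y ^ 2) := by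
      field_simp; ring
    rw [h2]; positivity
  have := hm hx
  simp only [Real.arctan_zero] at this
  norm_num at this
  linarith

lemma my_ratio_le_arctan {x : ℝ} (hx : 0 ≤ x) : x / (1 + x ^ 2) ≤ Real.arctan x := by
  have hd : ∀ y : ℝ, HasDerivAt (fun x : ℝ => x / (1 + x ^ 2))
      ((1 * (1 + y ^ 2) - y * (2 * y)) / (1 + y ^ 2) ^ 2) y := by
    intro y
    exact (hasDerivAt_id y).div (by simpa using (hasDerivAt_pow 2 y).const_add 1)
      (by positivity)
  have h : ∀ y : ℝ, HasDerivAt (fun x => Real.arctan x - x / (1 + x ^ 2))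
      (1 / (1 + y ^ 2) - (1 * (1 + y ^ 2) - y * (2 * y)) / (1 + y ^ 2) ^ 2) y :=
    fun y => (Real.hasDerivAt_arctan y).sub (hd y)
  have hm : Monotone (fun x => Real.arctan x - x / (1 + x ^ 2)) := by
    apply monotone_of_deriv_nonneg (fun y => (h y).differentiableAt)
    intro y
    rw [(h y).deriv]
    have h1 : (0:ℝ) < 1 + y ^ 2 := by positivity
    have h2 : 1 / (1 + y ^ 2) - (1 * (1 + y ^ 2) - y * (2 * y)) / (1 + y ^ 2) ^ 2
        = 2 * y ^ 2 / (1 + y ^ 2) ^ 2 := by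
      field_simp; ring
    rw [h2]; positivity
  have := hm hx
  simp only [Real.arctan_zero] at this
  norm_num at this
  linarith

lemma my_sum_half (d : ℕ) : ∑ j ∈ Finset.range d, ((j : ℝ) + 1 / 2) = (d : ℝ) ^ 2 / 2 := by
  induction d with
  | zero => simp
  | succ n ih => rw [Finset.sum_range_succ, ih]; push_cast; ring
set_option maxHeartbeats 1000000 in
/-- If `b_d` is the unique positive real with `∑_{j=0}^{d-1} cot⁻¹(b_d/(j+1/2)) = π/2`
(with `cot⁻¹(b/(j+1/2)) = arctan((j+1/2)/b)`), then `b_d = d²/π + O(1)` as `d → ∞`. -/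
theorem stmt_16 (b : ℕ → ℝ)
    (hpos : ∀ d, 1 ≤ d → 0 < b d)
    (hroot : ∀ d, 1 ≤ d →
      ∑ j ∈ Finset.range d, Real.arctan (((j : ℝ) + 1 / 2) / b d) = Real.pi / 2) :
    (fun d : ℕ => b d - (d : ℝ) ^ 2 / Real.pi) =O[atTop] (fun _ : ℕ => (1 : ℝ)) := by
  rw [isBigO_iff]
  refine ⟨11, ?_⟩
  filter_upwards [eventually_ge_atTop 24] with d hd
  have hd1 : 1 ≤ d := by omega
  have hB : 0 < b d := hpos d hd1
  set B := b d with hBdef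
  have hroot' := hroot d hd1
  have hdR : (24:ℝ) ≤ (d:ℝ) := by exact_mod_cast hd
  have hπ : 3.14 < Real.pi := by linarith [Real.pi_gt_d6]
  have hπ' : Real.pi < 3.15 := Real.pi_lt_d2
  have hjle : ∀ j ∈ Finset.range d, ((j:ℝ) + 1/2) ≤ (d:ℝ) := by
    intro j hj
    rw [Finset.mem_range] at hj
    have : (j:ℝ) + 1 ≤ (d:ℝ) := by exact_mod_cast hj
    linarith
  -- Upper bound: π B ≤ d²
  have hupper : Real.pi * B ≤ (d:ℝ)^2 := by
    have h1 : Real.pi / 2 ≤ (d:ℝ)^2/2 / B := by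
      rw [← hroot']
      calc ∑ j ∈ Finset.range d, Real.arctan (((j:ℝ)+1/2)/B)
          ≤ ∑ j ∈ Finset.range d, ((j:ℝ)+1/2)/B :=
            Finset.sum_le_sum fun j _ => my_arctan_le_self (by positivity)
        _ = (d:ℝ)^2/2/B := by rw [← Finset.sum_div, my_sum_half]
    rw [le_div_iff₀ hB] at h1
    linarith
  -- per-term lower bound via the smallest term
  have hcard : (d:ℝ) * Real.arctan (1/(2*B)) ≤ Real.pi / 2 := by
    rw [← hroot']
    have hterm : ∀ j ∈ Finset.range d,
        Real.arctan (1/(2*B)) ≤ Real.arctan (((j:ℝ)+1/2)/B) := by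
      intro j _
      apply Real.arctan_strictMono.monotone
      rw [div_le_div_iff₀ (by positivity) hB]
      nlinarith [Nat.cast_nonneg (α := ℝ) j]
    have := Finset.card_nsmul_le_sum (Finset.range d) _ _ hterm
    simpa [Finset.card_range, nsmul_eq_mul] using this
  -- B > 7
  have hB7 : 7 < B := by
    by_contra h
    push_neg at h
    have h14 : (1:ℝ)/15 ≤ Real.arctan (1/(2*B)) := by
      have h1 : (1:ℝ)/14 ≤ 1/(2*B) := by
        rw [div_le_div_iff₀ (by norm_num) (by positivity)]
        linarith
      have h2 := my_ratio_le_arctan (show (0:ℝ) ≤ 1/14 by norm_num)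
      have h3 : Real.arctan (1/14) ≤ Real.arctan (1/(2*B)) :=
        Real.arctan_strictMono.monotone h1
      norm_num at h2
      linarith
    nlinarith [mul_le_mul_of_nonneg_left h14 (show (0:ℝ) ≤ (d:ℝ) by positivity)]
  -- rational lower bound: B d² ≤ π (B² + d²)
  have hrat : B * (d:ℝ)^2 ≤ Real.pi * (B^2 + (d:ℝ)^2) := by
    have h1 : B * ((d:ℝ)^2/2) / (B^2 + (d:ℝ)^2) ≤ Real.pi / 2 := by
      rw [← hroot']
      calc B * ((d:ℝ)^2/2) / (B^2 + (d:ℝ)^2)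
          = ∑ j ∈ Finset.range d, B * ((j:ℝ)+1/2) / (B^2 + (d:ℝ)^2) := by
            rw [← Finset.sum_div, ← Finset.mul_sum, my_sum_half]
        _ ≤ ∑ j ∈ Finset.range d, Real.arctan (((j:ℝ)+1/2)/B) := by
            apply Finset.sum_le_sum
            intro j hj
            have hjd := hjle j hj
            have hjnn : (0:ℝ) ≤ (j:ℝ) + 1/2 := by positivity
            have h2 := my_ratio_le_arctan (show (0:ℝ) ≤ ((j:ℝ)+1/2)/B by positivity)
            have h3 : (((j:ℝ)+1/2)/B) / (1 + (((j:ℝ)+1/2)/B)^2)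
                = B * ((j:ℝ)+1/2) / (B^2 + ((j:ℝ)+1/2)^2) := by
              field_simp
            have h4 : B * ((j:ℝ)+1/2) / (B^2 + (d:ℝ)^2)
                ≤ B * ((j:ℝ)+1/2) / (B^2 + ((j:ℝ)+1/2)^2) := by
              apply div_le_div_of_nonneg_left (by positivity) (by positivity)
              nlinarith
            rw [h3] at h2
            linarith
    rw [div_le_div_iff₀ (by positivity) (by norm_num)] at h1
    nlinarith
  -- a priori lower bound: d² ≤ 7 B
  have hC : (d:ℝ)^2 ≤ 7 * B := by
    by_contra h
    push_neg at h
    nlinarith [hrat, hB7, hπ', mul_pos hB hB]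
  -- cubic lower bound, cleared of denominators
  have hcub : 3*B^2*(d:ℝ)^2 - 2*(d:ℝ)^4 ≤ 3*Real.pi*B^3 := by
    have hsum : (d:ℝ)^2/(2*B) - (d:ℝ)^4/(3*B^3) ≤ Real.pi / 2 := by
      rw [← hroot']
      calc (d:ℝ)^2/(2*B) - (d:ℝ)^4/(3*B^3)
          = ∑ j ∈ Finset.range d, (((j:ℝ)+1/2)/B - ((d:ℝ)/B)^3/3) := by
            rw [Finset.sum_sub_distrib, ← Finset.sum_div, my_sum_half,
              Finset.sum_const, Finset.card_range, nsmul_eq_mul]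
            field_simp
        _ ≤ ∑ j ∈ Finset.range d, Real.arctan (((j:ℝ)+1/2)/B) := by
            apply Finset.sum_le_sum
            intro j hj
            have hjd := hjle j hj
            have hx : (0:ℝ) ≤ ((j:ℝ)+1/2)/B := by positivity
            have h2 := my_cubic_le_arctan hx
            have hxd : ((j:ℝ)+1/2)/B ≤ (d:ℝ)/B := by gcongr
            have h3 := pow_le_pow_left₀ hx hxd 3
            linarith
    have h1 := mul_le_mul_of_nonneg_right hsum
      (show (0:ℝ) ≤ 6*B^3 by positivity)
    have h2 : ((d:ℝ)^2/(2*B) - (d:ℝ)^4/(3*B^3)) * (6*B^3)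
        = 3*B^2*(d:ℝ)^2 - 2*(d:ℝ)^4 := by
      field_simp
      ring
    rw [h2] at h1
    nlinarith
  -- d⁴ ≤ 49 B²
  have hd4 : (d:ℝ)^4 ≤ 49*B^2 := by
    nlinarith [mul_le_mul hC hC (by positivity : (0:ℝ) ≤ (d:ℝ)^2) (by positivity : (0:ℝ) ≤ 7*B)]
  -- d² ≤ π B + 98/3
  have h7 : (d:ℝ)^2 ≤ Real.pi * B + 98/3 := by
    nlinarith [hcub, hd4, hB, mul_pos hB hB]
  -- conclude
  have hle : B - (d:ℝ)^2 / Real.pi ≤ 0 := by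
    have : B ≤ (d:ℝ)^2 / Real.pi := by
      rw [le_div_iff₀ Real.pi_pos]
      linarith
    linarith
  have hge : -11 ≤ B - (d:ℝ)^2 / Real.pi := by
    have : (d:ℝ)^2 / Real.pi ≤ B + 11 := by
      rw [div_le_iff₀ Real.pi_pos]
      nlinarith
    linarith
  simp only [norm_one, mul_one, Real.norm_eq_abs]
  rw [abs_le]
  constructor <;> linarith
end

section
/- Let z = x + iy with y > 0 and x > -1/2, let \theta be the angle at 0 in the triangle with vertices 0, z-1, z+1, and let \phi be the angle at 0 in the triangle with vertices 0, z, z+2. Then \theta + \phi > \pi if and only if y^2 < -x^2 - x + 1/2. -/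
private lemma aux_sign (A B p q k : ℝ) (hp : 0 < p) (hq : 0 < q) (hAB : A < B)
    (hk : 0 < k) (hid : A ^ 2 * q ^ 2 - B ^ 2 * p ^ 2 = -k * (A + B)) :
    A * q + B * p < 0 ↔ A + B < 0 := by
  constructor
  · intro h
    by_contra hge
    push_neg at hge
    rcases le_or_gt 0 A with hA | hA
    · nlinarith
    · have hB : 0 < B := by nlinarith
      nlinarith [mul_pos hB hp, mul_pos (neg_pos.mpr hA) hq, sq_nonneg (A * q - B * p)]
  · intro h
    have hA : A < 0 := by linarith
    rcases le_or_gt B 0 with hB | hB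
    · nlinarith
    · nlinarith [mul_pos hB hp, mul_pos (neg_pos.mpr hA) hq, sq_nonneg (A * q + B * p)]

set_option maxHeartbeats 800000 in
/-- Let `z = x + iy` with `y > 0` and `x > -1/2`. Let `θ` be the angle at `0` between
`z - 1` and `z + 1`, and `φ` the angle at `0` between `z` and `z + 2` (each the absolute
difference of arguments). Then `θ + φ > π` iff `y² < -x² - x + 1/2`. -/
theorem stmt_17 (x y : ℝ) (hy : 0 < y) (hx : -(1 / 2) < x) :
    (|Complex.arg ((⟨x, y⟩ : ℂ) - 1) - Complex.arg ((⟨x, y⟩ : ℂ) + 1)| +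
       |Complex.arg (⟨x, y⟩ : ℂ) - Complex.arg ((⟨x, y⟩ : ℂ) + 2)| > Real.pi) ↔
      y ^ 2 < -x ^ 2 - x + 1 / 2 := by
  set z : ℂ := ⟨x, y⟩ with hz
  have him1 : (z - 1).im = y := by simp [hz]
  have hre1 : (z - 1).re = x - 1 := by simp [hz]
  have him2 : (z + 1).im = y := by simp [hz]
  have hre2 : (z + 1).re = x + 1 := by simp [hz]
  have him3 : z.im = y := rfl
  have hre3 : z.re = x := rfl
  have him4 : (z + 2).im = y := by simp [hz]
  have hre4 : (z + 2).re = x + 2 := by simp [hz]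
  -- nonzeroness
  have hne1 : z - 1 ≠ 0 := fun h => by simp [h] at him1; linarith
  have hne2 : z + 1 ≠ 0 := fun h => by simp [h] at him2; linarith
  have hne3 : z ≠ 0 := by
    intro h
    have : y = 0 := by simpa [hz] using congrArg Complex.im h
    linarith
  have hne4 : z + 2 ≠ 0 := fun h => by simp [h] at him4; linarith
  -- arg bounds for a point with positive imaginary part
  have argb : ∀ w : ℂ, w.im = y → 0 < Complex.arg w ∧ Complex.arg w < Real.pi := by
    intro w hw
    refine ⟨lt_of_le_of_ne (Complex.arg_nonneg_iff.mpr (by rw [hw]; linarith)) ?_,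
      Complex.arg_lt_pi_iff.mpr (Or.inr (by rw [hw]; linarith))⟩
    intro h
    have := Complex.arg_eq_zero_iff.mp h.symm
    rw [hw] at this; linarith [this.2]
  obtain ⟨h1p, h1π⟩ := argb _ him1
  obtain ⟨h2p, h2π⟩ := argb _ him2
  obtain ⟨h3p, h3π⟩ := argb _ him3
  obtain ⟨h4p, h4π⟩ := argb _ him4
  set θ : ℝ := |Complex.arg (z - 1) - Complex.arg (z + 1)| with hθ
  set φ : ℝ := |Complex.arg z - Complex.arg (z + 2)| with hφ
  have hθmem : θ ∈ Set.Icc 0 Real.pi := ⟨abs_nonneg _, le_of_lt (abs_lt.mpr ⟨by linarith, by linarith⟩)⟩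
  have hφmem : φ ∈ Set.Icc 0 Real.pi := ⟨abs_nonneg _, le_of_lt (abs_lt.mpr ⟨by linarith, by linarith⟩)⟩
  have hπφmem : Real.pi - φ ∈ Set.Icc 0 Real.pi := ⟨by linarith [hφmem.2], by linarith [hφmem.1]⟩
  -- step 1: θ + φ > π ↔ cos θ + cos φ < 0
  have step1 : θ + φ > Real.pi ↔ Real.cos θ + Real.cos φ < 0 := by
    rw [show (θ + φ > Real.pi) ↔ (Real.pi - φ < θ) from by constructor <;> intro <;> linarith,
      ← Real.strictAntiOn_cos.lt_iff_gt hθmem hπφmem, Real.cos_pi_sub]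
    constructor <;> intro <;> linarith
  -- cosines
  have r1 : ‖z - 1‖ > 0 := norm_pos_iff.mpr hne1
  have r2 : ‖z + 1‖ > 0 := norm_pos_iff.mpr hne2
  have r3 : ‖z‖ > 0 := norm_pos_iff.mpr hne3
  have r4 : ‖z + 2‖ > 0 := norm_pos_iff.mpr hne4
  have cosθ : Real.cos θ = ((x - 1) * (x + 1) + y * y) /
      (‖z - 1‖ * ‖z + 1‖) := by
    rw [hθ, Real.cos_abs, Real.cos_sub, Complex.cos_arg hne1, Complex.cos_arg hne2,
      Complex.sin_arg, Complex.sin_arg, hre1, hre2, him1, him2]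
    field_simp
  have cosφ : Real.cos φ = (x * (x + 2) + y * y) /
      (‖z‖ * ‖z + 2‖) := by
    rw [hφ, Real.cos_abs, Real.cos_sub, Complex.cos_arg hne3, Complex.cos_arg hne4,
      Complex.sin_arg, Complex.sin_arg, hre3, hre4, him3, him4]
    field_simp
  rw [step1, cosθ, cosφ]
  set p := ‖z - 1‖ * ‖z + 1‖ with hpdef
  set q := ‖z‖ * ‖z + 2‖ with hqdef
  have hp : 0 < p := mul_pos r1 r2
  have hq : 0 < q := mul_pos r3 r4
  set A : ℝ := (x - 1) * (x + 1) + y * y with hA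
  set B : ℝ := x * (x + 2) + y * y with hB
  have key : A / p + B / q < 0 ↔ A * q + B * p < 0 := by
    rw [div_add_div _ _ (ne_of_gt hp) (ne_of_gt hq), div_neg_iff]
    have hpq := mul_pos hp hq
    constructor
    · rintro (⟨h, h'⟩ | ⟨h, h'⟩)
      · linarith
      · linarith
    · intro h; exact Or.inr ⟨by linarith, hpq⟩
  have hp2 : p ^ 2 = ((x - 1) ^ 2 + y ^ 2) * ((x + 1) ^ 2 + y ^ 2) := by
    rw [hpdef, mul_pow, Complex.sq_norm, Complex.sq_norm, Complex.normSq_apply,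
      Complex.normSq_apply, hre1, him1, hre2, him2]; ring
  have hq2 : q ^ 2 = (x ^ 2 + y ^ 2) * ((x + 2) ^ 2 + y ^ 2) := by
    rw [hqdef, mul_pow, Complex.sq_norm, Complex.sq_norm, Complex.normSq_apply,
      Complex.normSq_apply, hre3, him3, hre4, him4]; ring
  have hid : A ^ 2 * q ^ 2 - B ^ 2 * p ^ 2 = -(4 * y ^ 2 * (2 * x + 1)) * (A + B) := by
    rw [hp2, hq2, hA, hB]; ring
  have hAB : A < B := by
    rw [hA, hB]
    have h1 : x * (x + 2) - (x - 1) * (x + 1) = 2 * x + 1 := by ring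
    linarith
  have hk : 0 < 4 * y ^ 2 * (2 * x + 1) := by
    have h2 : 0 < 2 * x + 1 := by linarith
    positivity
  rw [key, aux_sign A B p q _ hp hq hAB hk hid]
  have hsum : A + B = 2 * (x ^ 2 + y ^ 2 + x) - 1 := by rw [hA, hB]; ring
  rw [show (A + B < 0) ↔ (2 * (x ^ 2 + y ^ 2 + x) - 1 < 0) from by rw [hsum]]
  constructor <;> intro h <;> linarith
end
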